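/- arXiv:2112.09899 — 6 statements merged into one kernel-verified Lean document; each statement's English description precedes it below -/
import Mathlib

section
/- Let G, Y, G_n, G_sub be random variables on a probability space taking values in nonempty finite types. Assume (i) G_n is independent of Y, and (ii) the pair (Y, G_n) is conditionally independent of G_sub given G (i.e., G_n and Y influence G_sub only through G). Then I[G_sub : G_n] ≤ I[G_sub : G] − I[G_sub : Y]. (Paper's Lemma 1.) -/
open MeasureTheory ProbabilityTheory Real


/-- Shannon entropy (in nats) of a random variable `X` taking values in a finite type,
computed with respect to the measure `μ`: `H[X] = ∑ s, -p s * log (p s)` where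
`p s = μ (X ⁻¹' {s})`. -/
noncomputable def entropy {Ω S : Type*} [MeasurableSpace Ω] [Fintype S]
    (μ : Measure Ω) (X : Ω → S) : ℝ :=
  ∑ s : S, Real.negMulLog ((μ (X ⁻¹' {s})).toReal)

/-- Mutual information `I[X : Y] = H[X] + H[Y] - H[⟨X, Y⟩]`. -/
noncomputable def mutualInfo {Ω S T : Type*} [MeasurableSpace Ω] [Fintype S] [Fintype T]
    (μ : Measure Ω) (X : Ω → S) (Y : Ω → T) : ℝ :=
  entropy μ X + entropy μ Y - entropy μ (fun ω => (X ω, Y ω))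

/-- Marginalization: splitting a set along the fibers of a map into a finite type. -/
lemma marg {Ω T : Type*} [MeasurableSpace Ω] [Fintype T] [MeasurableSpace T]
    [MeasurableSingletonClass T] (μ : Measure Ω) [IsProbabilityMeasure μ]
    {s : Set Ω} (hs : MeasurableSet s) {X : Ω → T} (hX : Measurable X) :
    (μ s).toReal = ∑ t, (μ (s ∩ X ⁻¹' {t})).toReal := by
  rw [← ENNReal.toReal_sum (fun _ _ => measure_ne_top μ _)]
  have h : s = ⋃ t ∈ (Finset.univ : Finset T), s ∩ X ⁻¹' {t} := by
    ext ω; simp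
  have h2 : μ s = ∑ t : T, μ (s ∩ X ⁻¹' {t}) := by
    conv_lhs => rw [h]
    refine measure_biUnion_finset (fun a _ b _ hab => ?_)
      (fun t _ => hs.inter (hX (measurableSet_singleton t)))
    simp only [Set.disjoint_left, Set.mem_inter_iff, Set.mem_preimage, Set.mem_singleton_iff]
    rintro ω ⟨-, ha⟩ ⟨-, hb⟩
    exact hab (ha ▸ hb ▸ rfl)
  rw [h2]

/-- Expansion of the four entropy-type sums as a single triple sum. -/
lemma expand3 {S T U : Type*} [Fintype S] [Fintype T] [Fintype U] (q : S → T → U → ℝ) :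
    ((∑ x, ∑ z, negMulLog (∑ y, q x y z)) + ∑ y, ∑ z, negMulLog (∑ x, q x y z))
      - (∑ z, negMulLog (∑ x, ∑ y, q x y z)) - (∑ x, ∑ y, ∑ z, negMulLog (q x y z))
    = ∑ x, ∑ y, ∑ z, (q x y z * Real.log (q x y z)
        + q x y z * Real.log (∑ x', ∑ y', q x' y' z)
        - q x y z * Real.log (∑ y', q x y' z)
        - q x y z * Real.log (∑ x', q x' y z)) := by
  have eA : ∑ x, ∑ y, ∑ z, negMulLog (q x y z)
      = ∑ x, ∑ y, ∑ z, (-(q x y z * Real.log (q x y z))) := by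
    simp [negMulLog_eq_neg]
  have eB : (∑ z, negMulLog (∑ x, ∑ y, q x y z))
      = ∑ x, ∑ y, ∑ z, (-(q x y z * Real.log (∑ x', ∑ y', q x' y' z))) := by
    calc ∑ z, negMulLog (∑ x, ∑ y, q x y z)
        = ∑ z, ∑ x, ∑ y, (-(q x y z * Real.log (∑ x', ∑ y', q x' y' z))) := by
          refine Finset.sum_congr rfl fun z _ => ?_
          simp only [negMulLog_eq_neg]
          rw [Finset.sum_mul, ← Finset.sum_neg_distrib]
          refine Finset.sum_congr rfl fun x _ => ?_
          rw [Finset.sum_mul, ← Finset.sum_neg_distrib]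
      _ = ∑ x, ∑ y, ∑ z, (-(q x y z * Real.log (∑ x', ∑ y', q x' y' z))) := by
          rw [Finset.sum_comm]
          exact Finset.sum_congr rfl fun x _ => Finset.sum_comm
  have eC : (∑ x, ∑ z, negMulLog (∑ y, q x y z))
      = ∑ x, ∑ y, ∑ z, (-(q x y z * Real.log (∑ y', q x y' z))) := by
    refine Finset.sum_congr rfl fun x _ => ?_
    calc ∑ z, negMulLog (∑ y, q x y z)
        = ∑ z, ∑ y, (-(q x y z * Real.log (∑ y', q x y' z))) := by
          refine Finset.sum_congr rfl fun z _ => ?_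
          simp only [negMulLog_eq_neg]
          rw [Finset.sum_mul, ← Finset.sum_neg_distrib]
      _ = _ := Finset.sum_comm
  have eD : (∑ y, ∑ z, negMulLog (∑ x, q x y z))
      = ∑ x, ∑ y, ∑ z, (-(q x y z * Real.log (∑ x', q x' y z))) := by
    calc ∑ y, ∑ z, negMulLog (∑ x, q x y z)
        = ∑ y, ∑ z, ∑ x, (-(q x y z * Real.log (∑ x', q x' y z))) := by
          refine Finset.sum_congr rfl fun y _ => Finset.sum_congr rfl fun z _ => ?_
          simp only [negMulLog_eq_neg]
          rw [Finset.sum_mul, ← Finset.sum_neg_distrib]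
      _ = ∑ y, ∑ x, ∑ z, (-(q x y z * Real.log (∑ x', q x' y z))) := by
          exact Finset.sum_congr rfl fun y _ => Finset.sum_comm
      _ = _ := Finset.sum_comm
  rw [eA, eB, eC, eD]
  simp only [← Finset.sum_add_distrib, ← Finset.sum_sub_distrib]
  refine Finset.sum_congr rfl fun x _ => Finset.sum_congr rfl fun y _ =>
    Finset.sum_congr rfl fun z _ => by ring

/-- Nonnegativity of conditional mutual information, in entropy-sum form (Gibbs). -/
lemma gibbs3 {S T U : Type*} [Fintype S] [Fintype T] [Fintype U]
    (q : S → T → U → ℝ) (hq : ∀ x y z, 0 ≤ q x y z)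
    (hsum : ∑ x, ∑ y, ∑ z, q x y z = 1) :
    (∑ z, negMulLog (∑ x, ∑ y, q x y z)) + ∑ x, ∑ y, ∑ z, negMulLog (q x y z)
      ≤ (∑ x, ∑ z, negMulLog (∑ y, q x y z)) + ∑ y, ∑ z, negMulLog (∑ x, q x y z) := by
  have hpxz : ∀ x y z, q x y z ≤ ∑ y', q x y' z := fun x y z =>
    Finset.single_le_sum (fun i _ => hq x i z) (Finset.mem_univ y)
  have hpyz : ∀ x y z, q x y z ≤ ∑ x', q x' y z := fun x y z =>
    Finset.single_le_sum (fun i _ => hq i y z) (Finset.mem_univ x)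
  have hpz : ∀ (x : S) (_ : T) (z : U), (∑ y', q x y' z) ≤ ∑ x', ∑ y', q x' y' z := fun x _ z =>
    Finset.single_le_sum (fun i _ => Finset.sum_nonneg fun j _ => hq i j z) (Finset.mem_univ x)
  have hpxz0 : ∀ x z, 0 ≤ ∑ y', q x y' z := fun x z => Finset.sum_nonneg fun j _ => hq x j z
  have hpyz0 : ∀ y z, 0 ≤ ∑ x', q x' y z := fun y z => Finset.sum_nonneg fun i _ => hq i y z
  have hpz0 : ∀ z, 0 ≤ ∑ x', ∑ y', q x' y' z := fun z =>
    Finset.sum_nonneg fun i _ => hpxz0 i z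
  -- pointwise bound
  have hpoint : ∀ x y z,
      q x y z - (∑ y', q x y' z) * (∑ x', q x' y z) / (∑ x', ∑ y', q x' y' z)
      ≤ q x y z * Real.log (q x y z)
        + q x y z * Real.log (∑ x', ∑ y', q x' y' z)
        - q x y z * Real.log (∑ y', q x y' z)
        - q x y z * Real.log (∑ x', q x' y z) := by
    intro x y z
    rcases (hq x y z).eq_or_lt with h0 | h0
    · rw [← h0]
      have : 0 ≤ (∑ y', q x y' z) * (∑ x', q x' y z) / (∑ x', ∑ y', q x' y' z) :=
        div_nonneg (mul_nonneg (hpxz0 x z) (hpyz0 y z)) (hpz0 z)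
      simp only [zero_mul, zero_sub, add_zero, sub_zero, zero_add]
      linarith
    · have hx : 0 < ∑ y', q x y' z := lt_of_lt_of_le h0 (hpxz x y z)
      have hy : 0 < ∑ x', q x' y z := lt_of_lt_of_le h0 (hpyz x y z)
      have hz : 0 < ∑ x', ∑ y', q x' y' z := lt_of_lt_of_le hx (hpz x y z)
      set a := q x y z with ha
      set b := (∑ y', q x y' z) * (∑ x', q x' y z) / (∑ x', ∑ y', q x' y' z) with hb
      have hbpos : 0 < b := div_pos (mul_pos hx hy) hz
      have hlog : Real.log (b / a) ≤ b / a - 1 := Real.log_le_sub_one_of_pos (div_pos hbpos h0)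
      have e2 : Real.log a + Real.log (∑ x', ∑ y', q x' y' z)
          - Real.log (∑ y', q x y' z) - Real.log (∑ x', q x' y z) = -Real.log (b / a) := by
        rw [Real.log_div hbpos.ne' h0.ne', hb,
          Real.log_div (mul_pos hx hy).ne' hz.ne', Real.log_mul hx.ne' hy.ne']
        ring
      have e3 : a * Real.log a + a * Real.log (∑ x', ∑ y', q x' y' z)
          - a * Real.log (∑ y', q x y' z) - a * Real.log (∑ x', q x' y z)
          = a * (-(Real.log (b / a))) := by rw [← e2]; ring
      rw [e3]
      have h4 : a * Real.log (b / a) ≤ a * (b / a - 1) :=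
        mul_le_mul_of_nonneg_left hlog h0.le
      have h5 : a * (b / a - 1) = b - a := by field_simp
      nlinarith
  -- total mass of b
  have hbsum : ∑ x, ∑ y, ∑ z,
      (∑ y', q x y' z) * (∑ x', q x' y z) / (∑ x', ∑ y', q x' y' z) = 1 := by
    have hz : ∀ z, ∑ x, ∑ y,
        (∑ y', q x y' z) * (∑ x', q x' y z) / (∑ x', ∑ y', q x' y' z)
        = ∑ x, ∑ y, q x y z := by
      intro z
      have : ∑ x, ∑ y, (∑ y', q x y' z) * (∑ x', q x' y z) / (∑ x', ∑ y', q x' y' z)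
          = (∑ x, ∑ y', q x y' z) * (∑ y, ∑ x', q x' y z) / (∑ x', ∑ y', q x' y' z) := by
        rw [Finset.sum_mul, Finset.sum_div]
        refine Finset.sum_congr rfl fun x _ => ?_
        rw [Finset.mul_sum, Finset.sum_div]
      rw [this]
      have hyx : (∑ y, ∑ x', q x' y z) = ∑ x', ∑ y', q x' y' z := Finset.sum_comm
      rw [hyx]
      rcases eq_or_lt_of_le (hpz0 z) with h0 | h0
      · rw [← h0]; simp
      · field_simp
    calc ∑ x, ∑ y, ∑ z, (∑ y', q x y' z) * (∑ x', q x' y z) / (∑ x', ∑ y', q x' y' z)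
        = ∑ x, ∑ z, ∑ y, (∑ y', q x y' z) * (∑ x', q x' y z) / (∑ x', ∑ y', q x' y' z) :=
          Finset.sum_congr rfl fun x _ => Finset.sum_comm
      _ = ∑ z, ∑ x, ∑ y, (∑ y', q x y' z) * (∑ x', q x' y z) / (∑ x', ∑ y', q x' y' z) :=
          Finset.sum_comm
      _ = ∑ z, ∑ x, ∑ y, q x y z := Finset.sum_congr rfl fun z _ => hz z
      _ = ∑ x, ∑ z, ∑ y, q x y z := Finset.sum_comm
      _ = ∑ x, ∑ y, ∑ z, q x y z :=
          Finset.sum_congr rfl fun x _ => Finset.sum_comm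
      _ = 1 := hsum
  have key : 0 ≤ ∑ x, ∑ y, ∑ z, (q x y z * Real.log (q x y z)
        + q x y z * Real.log (∑ x', ∑ y', q x' y' z)
        - q x y z * Real.log (∑ y', q x y' z)
        - q x y z * Real.log (∑ x', q x' y z)) := by
    have h1 : ∑ x, ∑ y, ∑ z,
        (q x y z - (∑ y', q x y' z) * (∑ x', q x' y z) / (∑ x', ∑ y', q x' y' z))
        ≤ ∑ x, ∑ y, ∑ z, (q x y z * Real.log (q x y z)
        + q x y z * Real.log (∑ x', ∑ y', q x' y' z)
        - q x y z * Real.log (∑ y', q x y' z)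
        - q x y z * Real.log (∑ x', q x' y z)) := by
      refine Finset.sum_le_sum fun x _ => Finset.sum_le_sum fun y _ =>
        Finset.sum_le_sum fun z _ => hpoint x y z
    have h2 : ∑ x, ∑ y, ∑ z,
        (q x y z - (∑ y', q x y' z) * (∑ x', q x' y z) / (∑ x', ∑ y', q x' y' z)) = 0 := by
      simp only [Finset.sum_sub_distrib]
      rw [hsum, hbsum]; ring
    linarith
  linarith [expand3 q, key]

/-- Vanishing of conditional mutual information under the factorization condition. -/
lemma condindep3 {S T U : Type*} [Fintype S] [Fintype T] [Fintype U]
    (q : S → T → U → ℝ) (hq : ∀ x y z, 0 ≤ q x y z)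
    (hfac : ∀ x y z, q x y z * (∑ x', ∑ y', q x' y' z)
      = (∑ y', q x y' z) * (∑ x', q x' y z)) :
    (∑ x, ∑ z, negMulLog (∑ y, q x y z)) + ∑ y, ∑ z, negMulLog (∑ x, q x y z)
      = (∑ z, negMulLog (∑ x, ∑ y, q x y z)) + ∑ x, ∑ y, ∑ z, negMulLog (q x y z) := by
  have hzero : ∑ x, ∑ y, ∑ z, (q x y z * Real.log (q x y z)
        + q x y z * Real.log (∑ x', ∑ y', q x' y' z)
        - q x y z * Real.log (∑ y', q x y' z)
        - q x y z * Real.log (∑ x', q x' y z)) = 0 := by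
    refine Finset.sum_eq_zero fun x _ => Finset.sum_eq_zero fun y _ =>
      Finset.sum_eq_zero fun z _ => ?_
    rcases (hq x y z).eq_or_lt with h0 | h0
    · rw [← h0]; ring
    · have hx : 0 < ∑ y', q x y' z :=
        lt_of_lt_of_le h0 (Finset.single_le_sum (fun i _ => hq x i z) (Finset.mem_univ y))
      have hy : 0 < ∑ x', q x' y z :=
        lt_of_lt_of_le h0 (Finset.single_le_sum (fun i _ => hq i y z) (Finset.mem_univ x))
      have hz : 0 < ∑ x', ∑ y', q x' y' z :=
        lt_of_lt_of_le hx (Finset.single_le_sum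
          (fun i _ => Finset.sum_nonneg fun j _ => hq i j z) (Finset.mem_univ x))
      have hl : Real.log (q x y z * (∑ x', ∑ y', q x' y' z))
          = Real.log ((∑ y', q x y' z) * (∑ x', q x' y z)) := by rw [hfac x y z]
      rw [Real.log_mul h0.ne' hz.ne', Real.log_mul hx.ne' hy.ne'] at hl
      nlinarith [hl]
  linarith [expand3 q, hzero]

/-- From the conditional-expectation product property, derive the pmf factorization on
each fiber of `G`. -/
lemma condexp_fiber_factor {Ω : Type*} [MeasurableSpace Ω]
    {SG : Type*} [MeasurableSpace SG] [MeasurableSingletonClass SG]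
    (μ : Measure Ω) [IsProbabilityMeasure μ]
    {G : Ω → SG} (hG : Measurable G)
    {s t : Set Ω} (hs : MeasurableSet s) (ht : MeasurableSet t)
    (h : (μ⟦s ∩ t | MeasurableSpace.comap G inferInstance⟧) =ᵐ[μ]
      fun ω => (μ⟦s | MeasurableSpace.comap G inferInstance⟧) ω
        * (μ⟦t | MeasurableSpace.comap G inferInstance⟧) ω)
    (g : SG) :
    (μ (s ∩ t ∩ G ⁻¹' {g})).toReal * (μ (G ⁻¹' {g})).toReal
      = (μ (s ∩ G ⁻¹' {g})).toReal * (μ (t ∩ G ⁻¹' {g})).toReal := by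
  have hm' : MeasurableSpace.comap G inferInstance ≤ ‹MeasurableSpace Ω› := hG.comap_le
  have hCgm' : MeasurableSet[MeasurableSpace.comap G inferInstance] (G ⁻¹' {g}) :=
    ⟨{g}, measurableSet_singleton g, rfl⟩
  have hCg : MeasurableSet (G ⁻¹' {g}) := hG (measurableSet_singleton g)
  by_cases hzero : μ (G ⁻¹' {g}) = 0
  · rw [measure_inter_null_of_null_right _ hzero, measure_inter_null_of_null_right _ hzero]
    simp
  · obtain ⟨ω0, hω0⟩ : (G ⁻¹' {g}).Nonempty := by
      rw [Set.nonempty_iff_ne_empty]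
      intro he
      exact hzero (by rw [he]; exact measure_empty)
    have hconst : ∀ (f : Ω → ℝ), StronglyMeasurable[MeasurableSpace.comap G inferInstance] f →
        ∀ ω ∈ G ⁻¹' {g}, f ω = f ω0 := by
      intro f hf ω hω
      have hfm : Measurable[MeasurableSpace.comap G inferInstance] f := hf.measurable
      obtain ⟨B, -, hB⟩ := hfm (measurableSet_singleton (f ω0))
      have h1 : ω0 ∈ G ⁻¹' B := by rw [hB]; exact rfl
      have h2 : ω ∈ G ⁻¹' B := by
        have hGω : G ω = G ω0 := by
          have e1 : G ω = g := hω
          have e2 : G ω0 = g := hω0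
          rw [e1, e2]
        simpa [Set.mem_preimage, hGω] using h1
      rw [hB] at h2
      exact h2
    have key : ∀ (E : Set Ω), MeasurableSet E →
        ∫ ω in G ⁻¹' {g}, (μ⟦E | MeasurableSpace.comap G inferInstance⟧) ω ∂μ
          = (μ (E ∩ G ⁻¹' {g})).toReal := by
      intro E hE
      rw [setIntegral_condExp hm' ((integrable_const (1 : ℝ)).indicator hE) hCgm']
      rw [setIntegral_indicator hE, setIntegral_const]
      rw [Set.inter_comm]
      simp [measureReal_def]
    have cval : ∀ (E : Set Ω), MeasurableSet E →
        (μ⟦E | MeasurableSpace.comap G inferInstance⟧) ω0 * (μ (G ⁻¹' {g})).toReal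
          = (μ (E ∩ G ⁻¹' {g})).toReal := by
      intro E hE
      have h1 : ∫ ω in G ⁻¹' {g}, (μ⟦E | MeasurableSpace.comap G inferInstance⟧) ω ∂μ
          = ∫ _ω in G ⁻¹' {g}, (μ⟦E | MeasurableSpace.comap G inferInstance⟧) ω0 ∂μ :=
        setIntegral_congr_fun hCg (fun ω hω => hconst _ stronglyMeasurable_condExp ω hω)
      rw [key E hE, setIntegral_const, smul_eq_mul] at h1
      rw [h1, measureReal_def]; ring
    have hprod : (μ (s ∩ t ∩ G ⁻¹' {g})).toReal
        = (μ⟦s | MeasurableSpace.comap G inferInstance⟧) ω0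
          * (μ⟦t | MeasurableSpace.comap G inferInstance⟧) ω0 * (μ (G ⁻¹' {g})).toReal := by
      have h1 : ∫ ω in G ⁻¹' {g}, (μ⟦s ∩ t | MeasurableSpace.comap G inferInstance⟧) ω ∂μ
          = ∫ ω in G ⁻¹' {g}, ((μ⟦s | MeasurableSpace.comap G inferInstance⟧) ω
            * (μ⟦t | MeasurableSpace.comap G inferInstance⟧) ω) ∂μ :=
        setIntegral_congr_ae hCg (h.mono fun ω hω _ => hω)
      have h2 : ∫ ω in G ⁻¹' {g}, ((μ⟦s | MeasurableSpace.comap G inferInstance⟧) ω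
            * (μ⟦t | MeasurableSpace.comap G inferInstance⟧) ω) ∂μ
          = ∫ _ω in G ⁻¹' {g}, ((μ⟦s | MeasurableSpace.comap G inferInstance⟧) ω0
            * (μ⟦t | MeasurableSpace.comap G inferInstance⟧) ω0) ∂μ :=
        setIntegral_congr_fun hCg (fun ω hω =>
          hconst _ (stronglyMeasurable_condExp.mul stronglyMeasurable_condExp) ω hω)
      rw [key (s ∩ t) (hs.inter ht)] at h1
      rw [h2, setIntegral_const, smul_eq_mul] at h1
      rw [h1, measureReal_def]; ring
    rw [hprod, ← cval s hs, ← cval t ht]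
    ring

/-- Paper's Lemma 1: if `G_n ⟂ Y` and `(Y, G_n) ⟂ G_sub | G`, then
`I[G_sub : G_n] ≤ I[G_sub : G] - I[G_sub : Y]`. -/
theorem lemma1_subgraph_info_bound
    {Ω : Type*} [MeasurableSpace Ω] [StandardBorelSpace Ω] [Nonempty Ω]
    (μ : Measure Ω) [IsProbabilityMeasure μ]
    {SG SY Sn Ssub : Type*}
    [Fintype SG] [Nonempty SG] [MeasurableSpace SG] [DiscreteMeasurableSpace SG]
    [Fintype SY] [Nonempty SY] [MeasurableSpace SY] [DiscreteMeasurableSpace SY]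
    [Fintype Sn] [Nonempty Sn] [MeasurableSpace Sn] [DiscreteMeasurableSpace Sn]
    [Fintype Ssub] [Nonempty Ssub] [MeasurableSpace Ssub] [DiscreteMeasurableSpace Ssub]
    (G : Ω → SG) (Y : Ω → SY) (Gn : Ω → Sn) (Gsub : Ω → Ssub)
    (hG : Measurable G) (hY : Measurable Y) (hGn : Measurable Gn) (hGsub : Measurable Gsub)
    (hindep : IndepFun Gn Y μ)
    (hcond : CondIndepFun (MeasurableSpace.comap G inferInstance) hG.comap_le
      (fun ω => (Y ω, Gn ω)) Gsub μ) :
    mutualInfo μ Gsub Gn ≤ mutualInfo μ Gsub G - mutualInfo μ Gsub Y := by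
  classical
  have Pc : ∀ {s t : Set Ω}, s = t → (μ s).toReal = (μ t).toReal := fun h => by rw [h]
  have mA : ∀ a : Ssub, MeasurableSet (Gsub ⁻¹' {a}) :=
    fun a => hGsub (measurableSet_singleton a)
  have mY : ∀ y : SY, MeasurableSet (Y ⁻¹' {y}) := fun y => hY (measurableSet_singleton y)
  have mN : ∀ n : Sn, MeasurableSet (Gn ⁻¹' {n}) := fun n => hGn (measurableSet_singleton n)
  have mG : ∀ g : SG, MeasurableSet (G ⁻¹' {g}) := fun g => hG (measurableSet_singleton g)
  have hWm : Measurable (fun ω => (Y ω, Gn ω)) := hY.prodMk hGn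
  have mW : ∀ w : SY × Sn, MeasurableSet (Y ⁻¹' {w.1} ∩ Gn ⁻¹' {w.2}) :=
    fun w => (mY w.1).inter (mN w.2)
  -- marginalization over the pair (Y, Gn)
  have margW : ∀ {s : Set Ω}, MeasurableSet s →
      (μ s).toReal = ∑ w : SY × Sn, (μ (s ∩ (Y ⁻¹' {w.1} ∩ Gn ⁻¹' {w.2}))).toReal := by
    intro s hs
    rw [marg μ hs hWm]
    refine Finset.sum_congr rfl fun w _ => Pc ?_
    ext ω
    simp only [Set.mem_inter_iff, Set.mem_preimage, Set.mem_singleton_iff, Prod.ext_iff]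
  have sY1 : ∑ y, (μ (Y ⁻¹' {y})).toReal = 1 := by
    simpa using (marg μ MeasurableSet.univ hY).symm
  have sN1 : ∑ n, (μ (Gn ⁻¹' {n})).toReal = 1 := by
    simpa using (marg μ MeasurableSet.univ hGn).symm
  have sA1 : ∑ a, (μ (Gsub ⁻¹' {a})).toReal = 1 := by
    simpa using (marg μ MeasurableSet.univ hGsub).symm
  ---- STEP 1 : I[Y : Gn | Gsub] ≥ 0
  have hsum1 : ∑ y, ∑ n, ∑ a,
      (μ (Y ⁻¹' {y} ∩ Gn ⁻¹' {n} ∩ Gsub ⁻¹' {a})).toReal = 1 := by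
    calc ∑ y, ∑ n, ∑ a, (μ (Y ⁻¹' {y} ∩ Gn ⁻¹' {n} ∩ Gsub ⁻¹' {a})).toReal
        = ∑ y, ∑ n, (μ (Y ⁻¹' {y} ∩ Gn ⁻¹' {n})).toReal :=
          Finset.sum_congr rfl fun y _ => Finset.sum_congr rfl fun n _ =>
            (marg μ ((mY y).inter (mN n)) hGsub).symm
      _ = ∑ y, (μ (Y ⁻¹' {y})).toReal :=
          Finset.sum_congr rfl fun y _ => (marg μ (mY y) hGn).symm
      _ = 1 := sY1
  have step1 := gibbs3 (fun y n a => (μ (Y ⁻¹' {y} ∩ Gn ⁻¹' {n} ∩ Gsub ⁻¹' {a})).toReal)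
    (fun _ _ _ => ENNReal.toReal_nonneg) hsum1
  have c1 : ∀ a : Ssub, (∑ y, ∑ n, (μ (Y ⁻¹' {y} ∩ Gn ⁻¹' {n} ∩ Gsub ⁻¹' {a})).toReal)
      = (μ (Gsub ⁻¹' {a})).toReal := by
    intro a
    rw [marg μ (mA a) hY]
    refine Finset.sum_congr rfl fun y _ => ?_
    rw [marg μ ((mA a).inter (mY y)) hGn]
    refine Finset.sum_congr rfl fun n _ => Pc ?_
    ext ω
    simp only [Set.mem_inter_iff, Set.mem_preimage, Set.mem_singleton_iff]
    tauto
  have c2 : (∑ y, ∑ n, ∑ a, negMulLog ((μ (Y ⁻¹' {y} ∩ Gn ⁻¹' {n} ∩ Gsub ⁻¹' {a})).toReal))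
      = ∑ a, ∑ y, ∑ n, negMulLog ((μ (Gsub ⁻¹' {a} ∩ (Y ⁻¹' {y} ∩ Gn ⁻¹' {n}))).toReal) := by
    calc ∑ y, ∑ n, ∑ a, negMulLog ((μ (Y ⁻¹' {y} ∩ Gn ⁻¹' {n} ∩ Gsub ⁻¹' {a})).toReal)
        = ∑ y, ∑ a, ∑ n, negMulLog ((μ (Y ⁻¹' {y} ∩ Gn ⁻¹' {n} ∩ Gsub ⁻¹' {a})).toReal) :=
          Finset.sum_congr rfl fun y _ => Finset.sum_comm
      _ = ∑ a, ∑ y, ∑ n, negMulLog ((μ (Y ⁻¹' {y} ∩ Gn ⁻¹' {n} ∩ Gsub ⁻¹' {a})).toReal) :=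
          Finset.sum_comm
      _ = _ := by
          refine Finset.sum_congr rfl fun a _ => Finset.sum_congr rfl fun y _ =>
            Finset.sum_congr rfl fun n _ => ?_
          rw [Pc (show Y ⁻¹' {y} ∩ Gn ⁻¹' {n} ∩ Gsub ⁻¹' {a}
            = Gsub ⁻¹' {a} ∩ (Y ⁻¹' {y} ∩ Gn ⁻¹' {n}) from by
              ext ω
              simp only [Set.mem_inter_iff, Set.mem_preimage, Set.mem_singleton_iff]
              tauto)]
  have c3 : (∑ y, ∑ a, negMulLog (∑ n, (μ (Y ⁻¹' {y} ∩ Gn ⁻¹' {n} ∩ Gsub ⁻¹' {a})).toReal))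
      = ∑ a, ∑ y, negMulLog ((μ (Gsub ⁻¹' {a} ∩ Y ⁻¹' {y})).toReal) := by
    rw [Finset.sum_comm]
    refine Finset.sum_congr rfl fun a _ => Finset.sum_congr rfl fun y _ => ?_
    congr 1
    rw [marg μ ((mA a).inter (mY y)) hGn]
    refine Finset.sum_congr rfl fun n _ => Pc ?_
    ext ω
    simp only [Set.mem_inter_iff, Set.mem_preimage, Set.mem_singleton_iff]
    tauto
  have c4 : (∑ n, ∑ a, negMulLog (∑ y, (μ (Y ⁻¹' {y} ∩ Gn ⁻¹' {n} ∩ Gsub ⁻¹' {a})).toReal))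
      = ∑ a, ∑ n, negMulLog ((μ (Gsub ⁻¹' {a} ∩ Gn ⁻¹' {n})).toReal) := by
    rw [Finset.sum_comm]
    refine Finset.sum_congr rfl fun a _ => Finset.sum_congr rfl fun n _ => ?_
    congr 1
    rw [marg μ ((mA a).inter (mN n)) hY]
    refine Finset.sum_congr rfl fun y _ => Pc ?_
    ext ω
    simp only [Set.mem_inter_iff, Set.mem_preimage, Set.mem_singleton_iff]
    tauto
  simp only [c1] at step1
  rw [c2, c3, c4] at step1
  -- step1 : ∑ a, negMulLog P(Aa) + hAW ≤ hAY + hAN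
  ---- STEP 2 : H[(Y, Gn)] = H[Y] + H[Gn]
  have hYN : ∀ y n, (μ (Y ⁻¹' {y} ∩ Gn ⁻¹' {n})).toReal
      = (μ (Y ⁻¹' {y})).toReal * (μ (Gn ⁻¹' {n})).toReal := by
    intro y n
    have h1 := hindep.measure_inter_preimage_eq_mul {n} {y}
      (measurableSet_singleton n) (measurableSet_singleton y)
    have h2 : μ (Y ⁻¹' {y} ∩ Gn ⁻¹' {n}) = μ (Gn ⁻¹' {n}) * μ (Y ⁻¹' {y}) := by
      rw [Set.inter_comm]; exact h1
    rw [h2, ENNReal.toReal_mul, mul_comm]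
  have step2 : (∑ y, ∑ n, negMulLog ((μ (Y ⁻¹' {y} ∩ Gn ⁻¹' {n})).toReal))
      = (∑ y, negMulLog ((μ (Y ⁻¹' {y})).toReal))
        + ∑ n, negMulLog ((μ (Gn ⁻¹' {n})).toReal) := by
    calc ∑ y, ∑ n, negMulLog ((μ (Y ⁻¹' {y} ∩ Gn ⁻¹' {n})).toReal)
        = ∑ y, ∑ n, ((μ (Gn ⁻¹' {n})).toReal * negMulLog ((μ (Y ⁻¹' {y})).toReal)
            + (μ (Y ⁻¹' {y})).toReal * negMulLog ((μ (Gn ⁻¹' {n})).toReal)) := by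
          refine Finset.sum_congr rfl fun y _ => Finset.sum_congr rfl fun n _ => ?_
          rw [hYN y n, negMulLog_mul]
      _ = ∑ y, ((∑ n, (μ (Gn ⁻¹' {n})).toReal) * negMulLog ((μ (Y ⁻¹' {y})).toReal)
            + (μ (Y ⁻¹' {y})).toReal * ∑ n, negMulLog ((μ (Gn ⁻¹' {n})).toReal)) := by
          refine Finset.sum_congr rfl fun y _ => ?_
          rw [Finset.sum_add_distrib, ← Finset.sum_mul, ← Finset.mul_sum]
      _ = ∑ y, (negMulLog ((μ (Y ⁻¹' {y})).toReal)
            + (μ (Y ⁻¹' {y})).toReal * ∑ n, negMulLog ((μ (Gn ⁻¹' {n})).toReal)) := by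
          refine Finset.sum_congr rfl fun y _ => ?_
          rw [sN1, one_mul]
      _ = (∑ y, negMulLog ((μ (Y ⁻¹' {y})).toReal))
            + (∑ y, (μ (Y ⁻¹' {y})).toReal) * ∑ n, negMulLog ((μ (Gn ⁻¹' {n})).toReal) := by
          rw [Finset.sum_add_distrib, ← Finset.sum_mul]
      _ = _ := by rw [sY1, one_mul]
  ---- STEP 3 : I[Gsub : G | (Y, Gn)] ≥ 0
  have hsum3 : ∑ a, ∑ g, ∑ w : SY × Sn,
      (μ (Gsub ⁻¹' {a} ∩ G ⁻¹' {g} ∩ (Y ⁻¹' {w.1} ∩ Gn ⁻¹' {w.2}))).toReal = 1 := by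
    calc ∑ a, ∑ g, ∑ w : SY × Sn,
        (μ (Gsub ⁻¹' {a} ∩ G ⁻¹' {g} ∩ (Y ⁻¹' {w.1} ∩ Gn ⁻¹' {w.2}))).toReal
        = ∑ a, ∑ g, (μ (Gsub ⁻¹' {a} ∩ G ⁻¹' {g})).toReal :=
          Finset.sum_congr rfl fun a _ => Finset.sum_congr rfl fun g _ =>
            (margW ((mA a).inter (mG g))).symm
      _ = ∑ a, (μ (Gsub ⁻¹' {a})).toReal :=
          Finset.sum_congr rfl fun a _ => (marg μ (mA a) hG).symm
      _ = 1 := sA1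
  have step3 := gibbs3
    (fun a g (w : SY × Sn) =>
      (μ (Gsub ⁻¹' {a} ∩ G ⁻¹' {g} ∩ (Y ⁻¹' {w.1} ∩ Gn ⁻¹' {w.2}))).toReal)
    (fun _ _ _ => ENNReal.toReal_nonneg) hsum3
  have d1 : (∑ w : SY × Sn, negMulLog (∑ a, ∑ g,
        (μ (Gsub ⁻¹' {a} ∩ G ⁻¹' {g} ∩ (Y ⁻¹' {w.1} ∩ Gn ⁻¹' {w.2}))).toReal))
      = ∑ y, ∑ n, negMulLog ((μ (Y ⁻¹' {y} ∩ Gn ⁻¹' {n})).toReal) := by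
    rw [Fintype.sum_prod_type]
    refine Finset.sum_congr rfl fun y _ => Finset.sum_congr rfl fun n _ => ?_
    congr 1
    rw [marg μ ((mY y).inter (mN n)) hGsub]
    refine Finset.sum_congr rfl fun a _ => ?_
    rw [marg μ (((mY y).inter (mN n)).inter (mA a)) hG]
    refine Finset.sum_congr rfl fun g _ => Pc ?_
    ext ω
    simp only [Set.mem_inter_iff, Set.mem_preimage, Set.mem_singleton_iff]
    tauto
  have d2 : (∑ a, ∑ g, ∑ w : SY × Sn, negMulLog
        ((μ (Gsub ⁻¹' {a} ∩ G ⁻¹' {g} ∩ (Y ⁻¹' {w.1} ∩ Gn ⁻¹' {w.2}))).toReal))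
      = ∑ a, ∑ g, ∑ y, ∑ n, negMulLog
        ((μ (Gsub ⁻¹' {a} ∩ G ⁻¹' {g} ∩ (Y ⁻¹' {y} ∩ Gn ⁻¹' {n}))).toReal) := by
    refine Finset.sum_congr rfl fun a _ => Finset.sum_congr rfl fun g _ => ?_
    rw [Fintype.sum_prod_type]
  have d3 : (∑ a, ∑ w : SY × Sn, negMulLog (∑ g,
        (μ (Gsub ⁻¹' {a} ∩ G ⁻¹' {g} ∩ (Y ⁻¹' {w.1} ∩ Gn ⁻¹' {w.2}))).toReal))
      = ∑ a, ∑ y, ∑ n, negMulLog ((μ (Gsub ⁻¹' {a} ∩ (Y ⁻¹' {y} ∩ Gn ⁻¹' {n}))).toReal) := by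
    refine Finset.sum_congr rfl fun a _ => ?_
    rw [Fintype.sum_prod_type]
    refine Finset.sum_congr rfl fun y _ => Finset.sum_congr rfl fun n _ => ?_
    congr 1
    rw [marg μ ((mA a).inter ((mY y).inter (mN n))) hG]
    refine Finset.sum_congr rfl fun g _ => Pc ?_
    ext ω
    simp only [Set.mem_inter_iff, Set.mem_preimage, Set.mem_singleton_iff]
    tauto
  have d4 : (∑ g, ∑ w : SY × Sn, negMulLog (∑ a,
        (μ (Gsub ⁻¹' {a} ∩ G ⁻¹' {g} ∩ (Y ⁻¹' {w.1} ∩ Gn ⁻¹' {w.2}))).toReal))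
      = ∑ g, ∑ y, ∑ n, negMulLog ((μ (G ⁻¹' {g} ∩ (Y ⁻¹' {y} ∩ Gn ⁻¹' {n}))).toReal) := by
    refine Finset.sum_congr rfl fun g _ => ?_
    rw [Fintype.sum_prod_type]
    refine Finset.sum_congr rfl fun y _ => Finset.sum_congr rfl fun n _ => ?_
    congr 1
    rw [marg μ ((mG g).inter ((mY y).inter (mN n))) hGsub]
    refine Finset.sum_congr rfl fun a _ => Pc ?_
    ext ω
    simp only [Set.mem_inter_iff, Set.mem_preimage, Set.mem_singleton_iff]
    tauto
  rw [d1, d2, d3, d4] at step3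
  ---- STEP 4 : I[Gsub : (Y, Gn) | G] = 0
  have hiff := (condIndepFun_iff_condExp_inter_preimage_eq_mul hWm hGsub).mp hcond
  have fact : ∀ (a : Ssub) (w : SY × Sn) (g : SG),
      (μ (Gsub ⁻¹' {a} ∩ (Y ⁻¹' {w.1} ∩ Gn ⁻¹' {w.2}) ∩ G ⁻¹' {g})).toReal
        * (μ (G ⁻¹' {g})).toReal
      = (μ (Gsub ⁻¹' {a} ∩ G ⁻¹' {g})).toReal
        * (μ ((Y ⁻¹' {w.1} ∩ Gn ⁻¹' {w.2}) ∩ G ⁻¹' {g})).toReal := by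
    intro a w g
    have hw : ((fun ω => (Y ω, Gn ω)) ⁻¹' {w}) = Y ⁻¹' {w.1} ∩ Gn ⁻¹' {w.2} := by
      ext ω
      simp only [Set.mem_inter_iff, Set.mem_preimage, Set.mem_singleton_iff, Prod.ext_iff]
    have h := condexp_fiber_factor μ hG (hWm (measurableSet_singleton w)) (mA a)
      (hiff {w} {a} (measurableSet_singleton w) (measurableSet_singleton a)) g
    rw [hw] at h
    calc (μ (Gsub ⁻¹' {a} ∩ (Y ⁻¹' {w.1} ∩ Gn ⁻¹' {w.2}) ∩ G ⁻¹' {g})).toReal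
          * (μ (G ⁻¹' {g})).toReal
        = (μ ((Y ⁻¹' {w.1} ∩ Gn ⁻¹' {w.2}) ∩ Gsub ⁻¹' {a} ∩ G ⁻¹' {g})).toReal
          * (μ (G ⁻¹' {g})).toReal := by
          rw [Pc (show Gsub ⁻¹' {a} ∩ (Y ⁻¹' {w.1} ∩ Gn ⁻¹' {w.2}) ∩ G ⁻¹' {g}
            = (Y ⁻¹' {w.1} ∩ Gn ⁻¹' {w.2}) ∩ Gsub ⁻¹' {a} ∩ G ⁻¹' {g} from by
              ext ω
              simp only [Set.mem_inter_iff, Set.mem_preimage, Set.mem_singleton_iff]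
              tauto)]
      _ = (μ ((Y ⁻¹' {w.1} ∩ Gn ⁻¹' {w.2}) ∩ G ⁻¹' {g})).toReal
          * (μ (Gsub ⁻¹' {a} ∩ G ⁻¹' {g})).toReal := h
      _ = _ := by ring
  have hfac4 : ∀ (a : Ssub) (w : SY × Sn) (g : SG),
      (μ (Gsub ⁻¹' {a} ∩ (Y ⁻¹' {w.1} ∩ Gn ⁻¹' {w.2}) ∩ G ⁻¹' {g})).toReal
        * (∑ a', ∑ w' : SY × Sn,
          (μ (Gsub ⁻¹' {a'} ∩ (Y ⁻¹' {w'.1} ∩ Gn ⁻¹' {w'.2}) ∩ G ⁻¹' {g})).toReal)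
      = (∑ w' : SY × Sn,
          (μ (Gsub ⁻¹' {a} ∩ (Y ⁻¹' {w'.1} ∩ Gn ⁻¹' {w'.2}) ∩ G ⁻¹' {g})).toReal)
        * ∑ a', (μ (Gsub ⁻¹' {a'} ∩ (Y ⁻¹' {w.1} ∩ Gn ⁻¹' {w.2}) ∩ G ⁻¹' {g})).toReal := by
    intro a w g
    have f1 : (∑ a', ∑ w' : SY × Sn,
        (μ (Gsub ⁻¹' {a'} ∩ (Y ⁻¹' {w'.1} ∩ Gn ⁻¹' {w'.2}) ∩ G ⁻¹' {g})).toReal)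
        = (μ (G ⁻¹' {g})).toReal := by
      rw [marg μ (mG g) hGsub]
      refine Finset.sum_congr rfl fun a' _ => ?_
      rw [margW ((mG g).inter (mA a'))]
      refine Finset.sum_congr rfl fun w' _ => Pc ?_
      ext ω
      simp only [Set.mem_inter_iff, Set.mem_preimage, Set.mem_singleton_iff]
      tauto
    have f2 : (∑ w' : SY × Sn,
        (μ (Gsub ⁻¹' {a} ∩ (Y ⁻¹' {w'.1} ∩ Gn ⁻¹' {w'.2}) ∩ G ⁻¹' {g})).toReal)
        = (μ (Gsub ⁻¹' {a} ∩ G ⁻¹' {g})).toReal := by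
      rw [margW ((mA a).inter (mG g))]
      refine Finset.sum_congr rfl fun w' _ => Pc ?_
      ext ω
      simp only [Set.mem_inter_iff, Set.mem_preimage, Set.mem_singleton_iff]
      tauto
    have f3 : (∑ a', (μ (Gsub ⁻¹' {a'} ∩ (Y ⁻¹' {w.1} ∩ Gn ⁻¹' {w.2}) ∩ G ⁻¹' {g})).toReal)
        = (μ ((Y ⁻¹' {w.1} ∩ Gn ⁻¹' {w.2}) ∩ G ⁻¹' {g})).toReal := by
      rw [marg μ ((mW w).inter (mG g)) hGsub]
      refine Finset.sum_congr rfl fun a' _ => Pc ?_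
      ext ω
      simp only [Set.mem_inter_iff, Set.mem_preimage, Set.mem_singleton_iff]
      tauto
    rw [f1, f2, f3]
    exact fact a w g
  have step4 := condindep3
    (fun a (w : SY × Sn) g =>
      (μ (Gsub ⁻¹' {a} ∩ (Y ⁻¹' {w.1} ∩ Gn ⁻¹' {w.2}) ∩ G ⁻¹' {g})).toReal)
    (fun _ _ _ => ENNReal.toReal_nonneg) hfac4
  -- conversions for step 4
  have e1 : (∑ a, ∑ g, negMulLog (∑ w : SY × Sn,
        (μ (Gsub ⁻¹' {a} ∩ (Y ⁻¹' {w.1} ∩ Gn ⁻¹' {w.2}) ∩ G ⁻¹' {g})).toReal))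
      = ∑ a, ∑ g, negMulLog ((μ (Gsub ⁻¹' {a} ∩ G ⁻¹' {g})).toReal) := by
    refine Finset.sum_congr rfl fun a _ => Finset.sum_congr rfl fun g _ => ?_
    congr 1
    rw [margW ((mA a).inter (mG g))]
    refine Finset.sum_congr rfl fun w' _ => Pc ?_
    ext ω
    simp only [Set.mem_inter_iff, Set.mem_preimage, Set.mem_singleton_iff]
    tauto
  have e2 : (∑ w : SY × Sn, ∑ g, negMulLog (∑ a,
        (μ (Gsub ⁻¹' {a} ∩ (Y ⁻¹' {w.1} ∩ Gn ⁻¹' {w.2}) ∩ G ⁻¹' {g})).toReal))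
      = ∑ g, ∑ y, ∑ n, negMulLog ((μ (G ⁻¹' {g} ∩ (Y ⁻¹' {y} ∩ Gn ⁻¹' {n}))).toReal) := by
    rw [Finset.sum_comm]
    refine Finset.sum_congr rfl fun g _ => ?_
    rw [Fintype.sum_prod_type]
    refine Finset.sum_congr rfl fun y _ => Finset.sum_congr rfl fun n _ => ?_
    congr 1
    rw [marg μ ((mG g).inter ((mY y).inter (mN n))) hGsub]
    refine Finset.sum_congr rfl fun a _ => Pc ?_
    ext ω
    simp only [Set.mem_inter_iff, Set.mem_preimage, Set.mem_singleton_iff]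
    tauto
  have e3 : (∑ g, negMulLog (∑ a, ∑ w : SY × Sn,
        (μ (Gsub ⁻¹' {a} ∩ (Y ⁻¹' {w.1} ∩ Gn ⁻¹' {w.2}) ∩ G ⁻¹' {g})).toReal))
      = ∑ g, negMulLog ((μ (G ⁻¹' {g})).toReal) := by
    refine Finset.sum_congr rfl fun g _ => ?_
    congr 1
    rw [marg μ (mG g) hGsub]
    refine Finset.sum_congr rfl fun a' _ => ?_
    rw [margW ((mG g).inter (mA a'))]
    refine Finset.sum_congr rfl fun w' _ => Pc ?_
    ext ω
    simp only [Set.mem_inter_iff, Set.mem_preimage, Set.mem_singleton_iff]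
    tauto
  have e4 : (∑ a, ∑ w : SY × Sn, ∑ g, negMulLog
        ((μ (Gsub ⁻¹' {a} ∩ (Y ⁻¹' {w.1} ∩ Gn ⁻¹' {w.2}) ∩ G ⁻¹' {g})).toReal))
      = ∑ a, ∑ g, ∑ y, ∑ n, negMulLog
        ((μ (Gsub ⁻¹' {a} ∩ G ⁻¹' {g} ∩ (Y ⁻¹' {y} ∩ Gn ⁻¹' {n}))).toReal) := by
    refine Finset.sum_congr rfl fun a _ => ?_
    rw [Finset.sum_comm]
    refine Finset.sum_congr rfl fun g _ => ?_
    rw [Fintype.sum_prod_type]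
    refine Finset.sum_congr rfl fun y _ => Finset.sum_congr rfl fun n _ => ?_
    rw [Pc (show Gsub ⁻¹' {a} ∩ (Y ⁻¹' {y} ∩ Gn ⁻¹' {n}) ∩ G ⁻¹' {g}
      = Gsub ⁻¹' {a} ∩ G ⁻¹' {g} ∩ (Y ⁻¹' {y} ∩ Gn ⁻¹' {n}) from by
        ext ω
        simp only [Set.mem_inter_iff, Set.mem_preimage, Set.mem_singleton_iff]
        tauto)]
  rw [e1, e2, e3, e4] at step4
  ---- assemble
  have pAN : entropy μ (fun ω => (Gsub ω, Gn ω))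
      = ∑ a, ∑ n, negMulLog ((μ (Gsub ⁻¹' {a} ∩ Gn ⁻¹' {n})).toReal) := by
    simp only [entropy]
    rw [Fintype.sum_prod_type]
    refine Finset.sum_congr rfl fun a _ => Finset.sum_congr rfl fun n _ => ?_
    congr 1
    refine Pc ?_
    ext ω
    simp only [Set.mem_preimage, Set.mem_singleton_iff, Set.mem_inter_iff, Prod.ext_iff]
  have pAG : entropy μ (fun ω => (Gsub ω, G ω))
      = ∑ a, ∑ g, negMulLog ((μ (Gsub ⁻¹' {a} ∩ G ⁻¹' {g})).toReal) := by
    simp only [entropy]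
    rw [Fintype.sum_prod_type]
    refine Finset.sum_congr rfl fun a _ => Finset.sum_congr rfl fun g _ => ?_
    congr 1
    refine Pc ?_
    ext ω
    simp only [Set.mem_preimage, Set.mem_singleton_iff, Set.mem_inter_iff, Prod.ext_iff]
  have pAY : entropy μ (fun ω => (Gsub ω, Y ω))
      = ∑ a, ∑ y, negMulLog ((μ (Gsub ⁻¹' {a} ∩ Y ⁻¹' {y})).toReal) := by
    simp only [entropy]
    rw [Fintype.sum_prod_type]
    refine Finset.sum_congr rfl fun a _ => Finset.sum_congr rfl fun y _ => ?_
    congr 1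
    refine Pc ?_
    ext ω
    simp only [Set.mem_preimage, Set.mem_singleton_iff, Set.mem_inter_iff, Prod.ext_iff]
  simp only [mutualInfo]
  rw [pAN, pAG, pAY]
  simp only [entropy]
  linarith [step1, step2, step3, step4]
end

section
/- Let G, Y, G_n, G_N be random variables on a probability space taking values in nonempty finite types, and let G_sub = f ∘ G_N for a measurable function f (the subgraph obtained by dropping the noise-injected part of the perturbed graph G_N). Assume (i) G_n is independent of Y, and (ii) the pair (Y, G_n) is conditionally independent of G_N given G. Then I[G_sub : G_n] ≤ I[G_N : G_n] ≤ I[G_N : G] − I[G_N : Y]. (Paper's Theorem 1.) -/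
open MeasureTheory ProbabilityTheory Real

open MeasureTheory ProbabilityTheory Real Finset

section Aux
variable {Ω : Type*} [MeasurableSpace Ω]

lemma mass_preimage_eq_sum {S : Type*} [Fintype S] [MeasurableSpace S]
    [DiscreteMeasurableSpace S]
    (μ : Measure Ω) [IsFiniteMeasure μ] {W : Ω → S} (hW : Measurable W)
    (P : S → Prop) [DecidablePred P] :
    (μ (W ⁻¹' {s | P s})).toReal = ∑ s ∈ Finset.univ.filter P, (μ (W ⁻¹' {s})).toReal := by
  have h1 : W ⁻¹' {s | P s} = ⋃ s ∈ Finset.univ.filter P, W ⁻¹' {s} := by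
    ext ω; simp
  rw [h1, measure_biUnion_finset, ENNReal.toReal_sum fun s _ => measure_ne_top μ _]
  · intro s hs t ht hst
    apply Set.disjoint_left.2
    intro ω h1 h2
    exact hst (by simpa using (h1.symm.trans h2 : _))
  · intro s _; exact hW (MeasurableSet.singleton s)

lemma sum_mass {S : Type*} [Fintype S] [MeasurableSpace S] [DiscreteMeasurableSpace S]
    (μ : Measure Ω) [IsProbabilityMeasure μ] {W : Ω → S} (hW : Measurable W) :
    ∑ s : S, (μ (W ⁻¹' {s})).toReal = 1 := by
  classical
  have := mass_preimage_eq_sum μ hW (fun _ => True)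
  simp only [Set.setOf_true, Set.preimage_univ, measure_univ, ENNReal.toReal_one,
    Finset.filter_true] at this
  exact this.symm

/-- entropy is invariant under composing with an injective map. -/
lemma entropy_comp_injective {S T : Type*} [Fintype S] [Fintype T]
    (μ : Measure Ω) (W : Ω → S) {e : S → T} (he : Function.Injective e) :
    entropy μ (e ∘ W) = entropy μ W := by
  classical
  unfold entropy
  rw [← Finset.sum_subset (Finset.subset_univ (Finset.univ.image e))]
  · rw [Finset.sum_image (fun a _ b _ h => he h)]
    refine Finset.sum_congr rfl fun s _ => ?_
    have : (e ∘ W) ⁻¹' {e s} = W ⁻¹' {s} := by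
      ext ω; simp [he.eq_iff]
    rw [this]
  · intro t _ ht
    have : (e ∘ W) ⁻¹' {t} = ∅ := by
      ext ω
      simp only [Set.mem_preimage, Function.comp_apply, Set.mem_singleton_iff,
        Set.mem_empty_iff_false, iff_false]
      intro h
      exact ht (Finset.mem_image.2 ⟨W ω, Finset.mem_univ _, h⟩)
    simp [this]

end Aux


section CMI
variable {A B C : Type*} [Fintype A] [Fintype B] [Fintype C]

lemma sum3_comm (g : A → B → C → ℝ) :
    ∑ a, ∑ b, ∑ c, g a b c = ∑ c, ∑ a, ∑ b, g a b c := by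
  have h1 : ∀ a, ∑ b, ∑ c, g a b c = ∑ c, ∑ b, g a b c := fun a => Finset.sum_comm
  simp_rw [h1]
  exact Finset.sum_comm

lemma sum3_comm' (g : A → B → C → ℝ) :
    ∑ a, ∑ b, ∑ c, g a b c = ∑ b, ∑ c, ∑ a, g a b c := by
  rw [sum3_comm]; exact sum3_comm fun c a b => g a b c

lemma sum_triple (g : A × B × C → ℝ) :
    ∑ x : A × B × C, g x = ∑ a, ∑ b, ∑ c, g (a, b, c) := by
  rw [Fintype.sum_prod_type]
  exact Finset.sum_congr rfl fun a _ => Fintype.sum_prod_type _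

lemma neg_sum_mul {ι : Type*} [Fintype ι] (f : ι → ℝ) (L : ℝ) :
    -((∑ i, f i) * L) = ∑ i, -(f i * L) := by
  simp [Finset.sum_mul]

/-- Core inequality: nonnegativity of conditional mutual information,
purely at the level of nonnegative weight functions. -/
lemma cmi_core (q : A × B × C → ℝ) (hq : ∀ x, 0 ≤ q x) :
    ∑ x : A × B × C, negMulLog (q x) + ∑ c : C, negMulLog (∑ a, ∑ b, q (a, b, c))
      ≤ ∑ p : A × C, negMulLog (∑ b, q (p.1, b, p.2))
        + ∑ p : B × C, negMulLog (∑ a, q (a, p.1, p.2)) := by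
  classical
  set qAC : A → C → ℝ := fun a c => ∑ b, q (a, b, c) with hqACd
  set qBC : B → C → ℝ := fun b c => ∑ a, q (a, b, c) with hqBCd
  set qC : C → ℝ := fun c => ∑ a, ∑ b, q (a, b, c) with hqCd
  -- basic facts
  have hqAC0 : ∀ a c, 0 ≤ qAC a c := fun a c => Finset.sum_nonneg fun _ _ => hq _
  have hqBC0 : ∀ b c, 0 ≤ qBC b c := fun b c => Finset.sum_nonneg fun _ _ => hq _
  have hqC0 : ∀ c, 0 ≤ qC c := fun c =>
    Finset.sum_nonneg fun _ _ => Finset.sum_nonneg fun _ _ => hq _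
  have hle_AC : ∀ a b c, q (a, b, c) ≤ qAC a c := fun a b c =>
    Finset.single_le_sum (f := fun b => q (a, b, c)) (fun _ _ => hq _) (mem_univ b)
  have hle_BC : ∀ a b c, q (a, b, c) ≤ qBC b c := fun a b c =>
    Finset.single_le_sum (f := fun a => q (a, b, c)) (fun _ _ => hq _) (mem_univ a)
  have hACle : ∀ a c, qAC a c ≤ qC c := fun a c =>
    Finset.single_le_sum (f := fun a => qAC a c) (fun a _ => hqAC0 a c) (mem_univ a)
  have hsumA : ∀ c, ∑ a, qAC a c = qC c := fun c => rfl
  have hsumB : ∀ c, ∑ b, qBC b c = qC c := fun c => Finset.sum_comm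
  -- rewrite the four entropy sums as triple sums
  have hABC : ∑ x : A × B × C, negMulLog (q x)
      = ∑ x : A × B × C, -(q x * log (q x)) := by
    simp [negMulLog_eq_neg]
  have hHC : ∑ c : C, negMulLog (qC c)
      = ∑ x : A × B × C, -(q x * log (qC x.2.2)) := by
    rw [sum_triple fun x => -(q x * log (qC x.2.2)),
      sum3_comm fun a b c => -(q (a, b, c) * log (qC c))]
    refine Finset.sum_congr rfl fun c _ => ?_
    rw [negMulLog_eq_neg]
    dsimp only
    rw [show qC c = ∑ a, (fun a => ∑ b, q (a, b, c)) a from rfl, neg_sum_mul]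
    exact Finset.sum_congr rfl fun a _ => neg_sum_mul _ _
  have hHAC : ∑ p : A × C, negMulLog (qAC p.1 p.2)
      = ∑ x : A × B × C, -(q x * log (qAC x.1 x.2.2)) := by
    rw [sum_triple fun x => -(q x * log (qAC x.1 x.2.2)), Fintype.sum_prod_type]
    refine Finset.sum_congr rfl fun a _ => ?_
    rw [Finset.sum_comm]
    refine Finset.sum_congr rfl fun c _ => ?_
    rw [negMulLog_eq_neg]
    dsimp only
    rw [show qAC a c = ∑ b, q (a, b, c) from rfl, neg_sum_mul]
  have hHBC : ∑ p : B × C, negMulLog (qBC p.1 p.2)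
      = ∑ x : A × B × C, -(q x * log (qBC x.2.1 x.2.2)) := by
    rw [sum_triple fun x => -(q x * log (qBC x.2.1 x.2.2)),
      sum3_comm' fun a b c => -(q (a, b, c) * log (qBC b c)), Fintype.sum_prod_type]
    refine Finset.sum_congr rfl fun b _ => ?_
    refine Finset.sum_congr rfl fun c _ => ?_
    rw [negMulLog_eq_neg]
    dsimp only
    rw [show qBC b c = ∑ a, q (a, b, c) from rfl, neg_sum_mul]
  rw [hABC, hHC, hHAC, hHBC, ← Finset.sum_add_distrib, ← Finset.sum_add_distrib,
    ← sub_nonneg, ← Finset.sum_sub_distrib]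
  -- now a single sum
  set F : A × B × C → ℝ := fun x =>
    -(q x * log (qAC x.1 x.2.2)) + -(q x * log (qBC x.2.1 x.2.2))
      - (-(q x * log (q x)) + -(q x * log (qC x.2.2))) with hF
  set G' : A × B × C → ℝ := fun x =>
    if 0 < qC x.2.2 then qAC x.1 x.2.2 * qBC x.2.1 x.2.2 / qC x.2.2 else 0 with hG'
  have hG'0 : ∀ x, 0 ≤ G' x := by
    intro x
    rw [hG']
    dsimp only
    split
    · have := hqAC0 x.1 x.2.2
      have := hqBC0 x.2.1 x.2.2
      have := hqC0 x.2.2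
      positivity
    · exact le_refl 0
  -- pointwise bound
  have hkey : ∀ x, q x - G' x ≤ F x := by
    rintro ⟨a, b, c⟩
    rcases eq_or_lt_of_le (hq (a, b, c)) with h0 | hpos
    · have hF0 : F (a, b, c) = 0 := by rw [hF]; dsimp only; rw [← h0]; ring
      rw [hF0, ← h0]
      simpa using hG'0 (a, b, c)
    · have hqACpos : 0 < qAC a c := lt_of_lt_of_le hpos (hle_AC a b c)
      have hqBCpos : 0 < qBC b c := lt_of_lt_of_le hpos (hle_BC a b c)
      have hqCpos : 0 < qC c := lt_of_lt_of_le hqACpos (hACle a c)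
      have hG'eq : G' (a, b, c) = qAC a c * qBC b c / qC c := by
        rw [hG']; dsimp only; rw [if_pos hqCpos]
      have hlog : log (qAC a c * qBC b c / (q (a, b, c) * qC c))
          ≤ qAC a c * qBC b c / (q (a, b, c) * qC c) - 1 :=
        log_le_sub_one_of_pos (by positivity)
      have hexp : log (qAC a c * qBC b c / (q (a, b, c) * qC c))
          = log (qAC a c) + log (qBC b c) - log (q (a, b, c)) - log (qC c) := by
        rw [log_div (by positivity) (by positivity), log_mul hqACpos.ne' hqBCpos.ne',
          log_mul hpos.ne' hqCpos.ne']
        ring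
      have h2 : q (a, b, c) * (log (qAC a c) + log (qBC b c)
            - log (q (a, b, c)) - log (qC c))
          ≤ qAC a c * qBC b c / qC c - q (a, b, c) := by
        calc q (a, b, c) * (log (qAC a c) + log (qBC b c)
              - log (q (a, b, c)) - log (qC c))
            ≤ q (a, b, c) * (qAC a c * qBC b c / (q (a, b, c) * qC c) - 1) := by
              apply mul_le_mul_of_nonneg_left _ hpos.le
              rw [← hexp]; exact hlog
          _ = qAC a c * qBC b c / qC c - q (a, b, c) := by
              field_simp
      rw [hF, hG'eq]
      dsimp only
      linarith [h2]
  -- summing up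
  have hsum1 : ∑ x : A × B × C, (q x - G' x) ≤ ∑ x, F x :=
    Finset.sum_le_sum fun x _ => hkey x
  have hsumG' : ∑ x : A × B × C, G' x = ∑ c, if 0 < qC c then qC c else 0 := by
    rw [sum_triple G', sum3_comm fun a b c => G' (a, b, c)]
    refine Finset.sum_congr rfl fun c _ => ?_
    by_cases hc : 0 < qC c
    · rw [if_pos hc]
      have : ∀ a b, G' (a, b, c) = qAC a c * qBC b c / qC c := by
        intro a b; rw [hG']; dsimp only; rw [if_pos hc]
      simp_rw [this]
      have hcne : qC c ≠ 0 := ne_of_gt hc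
      have hb : ∀ a, ∑ b, qAC a c * qBC b c / qC c = qAC a c := by
        intro a
        have : ∀ b, qAC a c * qBC b c / qC c = qBC b c * (qAC a c / qC c) := by
          intro b; ring
        simp_rw [this]
        rw [← Finset.sum_mul, hsumB c]
        field_simp
      simp_rw [hb]
      exact hsumA c
    · rw [if_neg hc]
      have hq0 : ∀ a b, q (a, b, c) = 0 := by
        intro a b
        have h1 : qC c ≤ 0 := le_of_not_gt hc
        have h2 : qC c = 0 := le_antisymm h1 (hqC0 c)
        by_contra hne
        have : 0 < q (a, b, c) := lt_of_le_of_ne (hq _) (Ne.symm hne)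
        exact absurd h2 (ne_of_gt (lt_of_lt_of_le this ((hle_AC a b c).trans (hACle a c))))
      have : ∀ a b, G' (a, b, c) = 0 := by
        intro a b; rw [hG']; dsimp only; rw [if_neg hc]
      simp [this]
  have hsumq : ∑ x : A × B × C, q x = ∑ c, qC c := by
    rw [sum_triple q, sum3_comm fun a b c => q (a, b, c)]
  have hlast : ∑ c, (if 0 < qC c then qC c else 0) ≤ ∑ c, qC c := by
    refine Finset.sum_le_sum fun c _ => ?_
    split
    · exact le_refl _
    · exact hqC0 c
  have := Finset.sum_sub_distrib (f := q) (g := G') ▸ hsum1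
  calc (0:ℝ) = ∑ c, qC c - ∑ c, qC c := by ring
    _ ≤ ∑ x : A × B × C, q x - ∑ x, G' x := by
        rw [hsumq, hsumG']; linarith [hlast]
    _ ≤ ∑ x, F x := by rw [← Finset.sum_sub_distrib]; exact hsum1
end CMI

section CMI2
variable {A B C : Type*} [Fintype A] [Fintype B] [Fintype C]

/-- Equality case: if the weights factorize, conditional mutual information vanishes. -/
lemma cmi_eq (q : A × B × C → ℝ) (hq : ∀ x, 0 ≤ q x)
    (hfac : ∀ a b c, q (a, b, c) * (∑ a', ∑ b', q (a', b', c))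
      = (∑ b', q (a, b', c)) * (∑ a', q (a', b, c))) :
    ∑ x : A × B × C, negMulLog (q x) + ∑ c : C, negMulLog (∑ a, ∑ b, q (a, b, c))
      = ∑ p : A × C, negMulLog (∑ b, q (p.1, b, p.2))
        + ∑ p : B × C, negMulLog (∑ a, q (a, p.1, p.2)) := by
  classical
  set qAC : A → C → ℝ := fun a c => ∑ b, q (a, b, c) with hqACd
  set qBC : B → C → ℝ := fun b c => ∑ a, q (a, b, c) with hqBCd
  set qC : C → ℝ := fun c => ∑ a, ∑ b, q (a, b, c) with hqCd
  have hqAC0 : ∀ a c, 0 ≤ qAC a c := fun a c => Finset.sum_nonneg fun _ _ => hq _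
  have hle_AC : ∀ a b c, q (a, b, c) ≤ qAC a c := fun a b c =>
    Finset.single_le_sum (f := fun b => q (a, b, c)) (fun _ _ => hq _) (mem_univ b)
  have hle_BC : ∀ a b c, q (a, b, c) ≤ qBC b c := fun a b c =>
    Finset.single_le_sum (f := fun a => q (a, b, c)) (fun _ _ => hq _) (mem_univ a)
  have hACle : ∀ a c, qAC a c ≤ qC c := fun a c =>
    Finset.single_le_sum (f := fun a => qAC a c) (fun a _ => hqAC0 a c) (mem_univ a)
  have hABC : ∑ x : A × B × C, negMulLog (q x)
      = ∑ x : A × B × C, -(q x * log (q x)) := by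
    simp [negMulLog_eq_neg]
  have hHC : ∑ c : C, negMulLog (qC c)
      = ∑ x : A × B × C, -(q x * log (qC x.2.2)) := by
    rw [sum_triple fun x => -(q x * log (qC x.2.2)),
      sum3_comm fun a b c => -(q (a, b, c) * log (qC c))]
    refine Finset.sum_congr rfl fun c _ => ?_
    rw [negMulLog_eq_neg]
    dsimp only
    rw [show qC c = ∑ a, (fun a => ∑ b, q (a, b, c)) a from rfl, neg_sum_mul]
    exact Finset.sum_congr rfl fun a _ => neg_sum_mul _ _
  have hHAC : ∑ p : A × C, negMulLog (qAC p.1 p.2)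
      = ∑ x : A × B × C, -(q x * log (qAC x.1 x.2.2)) := by
    rw [sum_triple fun x => -(q x * log (qAC x.1 x.2.2)), Fintype.sum_prod_type]
    refine Finset.sum_congr rfl fun a _ => ?_
    rw [Finset.sum_comm]
    refine Finset.sum_congr rfl fun c _ => ?_
    rw [negMulLog_eq_neg]
    dsimp only
    rw [show qAC a c = ∑ b, q (a, b, c) from rfl, neg_sum_mul]
  have hHBC : ∑ p : B × C, negMulLog (qBC p.1 p.2)
      = ∑ x : A × B × C, -(q x * log (qBC x.2.1 x.2.2)) := by
    rw [sum_triple fun x => -(q x * log (qBC x.2.1 x.2.2)),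
      sum3_comm' fun a b c => -(q (a, b, c) * log (qBC b c)), Fintype.sum_prod_type]
    refine Finset.sum_congr rfl fun b _ => ?_
    refine Finset.sum_congr rfl fun c _ => ?_
    rw [negMulLog_eq_neg]
    dsimp only
    rw [show qBC b c = ∑ a, q (a, b, c) from rfl, neg_sum_mul]
  rw [hABC, hHC, hHAC, hHBC, ← Finset.sum_add_distrib, ← Finset.sum_add_distrib]
  refine Finset.sum_congr rfl fun x _ => ?_
  obtain ⟨a, b, c⟩ := x
  rcases eq_or_lt_of_le (hq (a, b, c)) with h0 | hpos
  · rw [← h0]; ring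
  · have hqACpos : 0 < qAC a c := lt_of_lt_of_le hpos (hle_AC a b c)
    have hqBCpos : 0 < qBC b c := lt_of_lt_of_le hpos (hle_BC a b c)
    have hqCpos : 0 < qC c := lt_of_lt_of_le hqACpos (hACle a c)
    have hfac' : q (a, b, c) * qC c = qAC a c * qBC b c := hfac a b c
    have h3 : log (q (a, b, c)) + log (qC c) = log (qAC a c) + log (qBC b c) := by
      rw [← log_mul hpos.ne' (ne_of_gt hqCpos), ← log_mul (ne_of_gt hqACpos)
        (ne_of_gt hqBCpos), hfac']
    dsimp only
    linear_combination (-(q (a, b, c))) * h3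
end CMI2

section RV
variable {Ω : Type*} [MeasurableSpace Ω]
variable {α β γ : Type*}
  [Fintype α] [MeasurableSpace α] [DiscreteMeasurableSpace α]
  [Fintype β] [MeasurableSpace β] [DiscreteMeasurableSpace β]
  [Fintype γ] [MeasurableSpace γ] [DiscreteMeasurableSpace γ]
  (μ : Measure Ω) [IsFiniteMeasure μ]
  {A : Ω → α} {B : Ω → β} {C : Ω → γ}

lemma massAC (hA : Measurable A) (hB : Measurable B) (hC : Measurable C) (a : α) (c : γ) :
    (μ ((fun ω => (A ω, C ω)) ⁻¹' {(a, c)})).toReal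
      = ∑ b, (μ ((fun ω => (A ω, B ω, C ω)) ⁻¹' {(a, b, c)})).toReal := by
  classical
  have hW : Measurable (fun ω => (A ω, B ω, C ω)) := hA.prodMk (hB.prodMk hC)
  have hset : (fun ω => (A ω, C ω)) ⁻¹' {(a, c)}
      = (fun ω => (A ω, B ω, C ω)) ⁻¹' {x | x.1 = a ∧ x.2.2 = c} := by
    ext ω; simp [Prod.ext_iff]
  rw [hset, mass_preimage_eq_sum μ hW]
  refine Finset.sum_nbij' (fun x => x.2.1) (fun b => (a, b, c)) ?_ ?_ ?_ ?_ ?_ <;>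
    simp +contextual [Prod.ext_iff]

lemma massBC (hA : Measurable A) (hB : Measurable B) (hC : Measurable C) (b : β) (c : γ) :
    (μ ((fun ω => (B ω, C ω)) ⁻¹' {(b, c)})).toReal
      = ∑ a, (μ ((fun ω => (A ω, B ω, C ω)) ⁻¹' {(a, b, c)})).toReal := by
  classical
  have hW : Measurable (fun ω => (A ω, B ω, C ω)) := hA.prodMk (hB.prodMk hC)
  have hset : (fun ω => (B ω, C ω)) ⁻¹' {(b, c)}
      = (fun ω => (A ω, B ω, C ω)) ⁻¹' {x | x.2.1 = b ∧ x.2.2 = c} := by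
    ext ω; simp [Prod.ext_iff]
  rw [hset, mass_preimage_eq_sum μ hW]
  refine Finset.sum_nbij' (fun x => x.1) (fun a => (a, b, c)) ?_ ?_ ?_ ?_ ?_ <;>
    simp +contextual [Prod.ext_iff]

lemma massC (hA : Measurable A) (hB : Measurable B) (hC : Measurable C) (c : γ) :
    (μ (C ⁻¹' {c})).toReal
      = ∑ a, ∑ b, (μ ((fun ω => (A ω, B ω, C ω)) ⁻¹' {(a, b, c)})).toReal := by
  classical
  have hW : Measurable (fun ω => (A ω, B ω, C ω)) := hA.prodMk (hB.prodMk hC)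
  have hset : C ⁻¹' {c} = (fun ω => (A ω, B ω, C ω)) ⁻¹' {x | x.2.2 = c} := by
    ext ω; simp
  rw [hset, mass_preimage_eq_sum μ hW,
    show (∑ a : α, ∑ b : β, (μ ((fun ω => (A ω, B ω, C ω)) ⁻¹' {(a, b, c)})).toReal)
      = ∑ p : α × β, (μ ((fun ω => (A ω, B ω, C ω)) ⁻¹' {(p.1, p.2, c)})).toReal
      from (Fintype.sum_prod_type
        (f := fun p : α × β => (μ ((fun ω => (A ω, B ω, C ω)) ⁻¹' {(p.1, p.2, c)})).toReal)).symm]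
  refine Finset.sum_nbij' (fun x => (x.1, x.2.1)) (fun p => (p.1, p.2, c)) ?_ ?_ ?_ ?_ ?_
  · intro x _; exact Finset.mem_univ _
  · intro p _
    simp
  · intro x hx
    have : x.2.2 = c := by simpa using hx
    exact Prod.ext rfl (Prod.ext rfl this.symm)
  · intro p _; rfl
  · intro x hx
    have : x.2.2 = c := by simpa using hx
    rw [show ((x.1, x.2.1, c) : α × β × γ) = x from Prod.ext rfl (Prod.ext rfl this.symm)]

lemma entropy_pair_AC (hA : Measurable A) (hB : Measurable B) (hC : Measurable C) :
    entropy μ (fun ω => (A ω, C ω))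
      = ∑ p : α × γ, negMulLog (∑ b,
          (μ ((fun ω => (A ω, B ω, C ω)) ⁻¹' {(p.1, b, p.2)})).toReal) := by
  unfold entropy
  refine Finset.sum_congr rfl fun p _ => ?_
  rw [show ({p} : Set (α × γ)) = {(p.1, p.2)} from by simp, massAC μ hA hB hC p.1 p.2]

lemma entropy_pair_BC (hA : Measurable A) (hB : Measurable B) (hC : Measurable C) :
    entropy μ (fun ω => (B ω, C ω))
      = ∑ p : β × γ, negMulLog (∑ a,
          (μ ((fun ω => (A ω, B ω, C ω)) ⁻¹' {(a, p.1, p.2)})).toReal) := by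
  unfold entropy
  refine Finset.sum_congr rfl fun p _ => ?_
  rw [show ({p} : Set (β × γ)) = {(p.1, p.2)} from by simp, massBC μ hA hB hC p.1 p.2]

lemma entropy_C (hA : Measurable A) (hB : Measurable B) (hC : Measurable C) :
    entropy μ C
      = ∑ c : γ, negMulLog (∑ a, ∑ b,
          (μ ((fun ω => (A ω, B ω, C ω)) ⁻¹' {(a, b, c)})).toReal) := by
  unfold entropy
  exact Finset.sum_congr rfl fun c _ => by rw [massC μ hA hB hC c]

/-- Nonnegativity of conditional mutual information `I[A : B | C] ≥ 0`,
in entropy form. -/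
lemma condMI_nonneg (hA : Measurable A) (hB : Measurable B) (hC : Measurable C) :
    entropy μ (fun ω => (A ω, B ω, C ω)) + entropy μ C
      ≤ entropy μ (fun ω => (A ω, C ω)) + entropy μ (fun ω => (B ω, C ω)) := by
  rw [entropy_pair_AC μ hA hB hC, entropy_pair_BC μ hA hB hC, entropy_C μ hA hB hC]
  exact cmi_core (fun x => (μ ((fun ω => (A ω, B ω, C ω)) ⁻¹' {x})).toReal)
    (fun x => ENNReal.toReal_nonneg)

/-- Vanishing of conditional mutual information under a factorization condition. -/
lemma condMI_eq (hA : Measurable A) (hB : Measurable B) (hC : Measurable C)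
    (hfac : ∀ a b c,
      (μ ((fun ω => (A ω, B ω, C ω)) ⁻¹' {(a, b, c)})).toReal * (μ (C ⁻¹' {c})).toReal
        = (μ ((fun ω => (A ω, C ω)) ⁻¹' {(a, c)})).toReal
          * (μ ((fun ω => (B ω, C ω)) ⁻¹' {(b, c)})).toReal) :
    entropy μ (fun ω => (A ω, B ω, C ω)) + entropy μ C
      = entropy μ (fun ω => (A ω, C ω)) + entropy μ (fun ω => (B ω, C ω)) := by
  rw [entropy_pair_AC μ hA hB hC, entropy_pair_BC μ hA hB hC, entropy_C μ hA hB hC]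
  refine cmi_eq (fun x => (μ ((fun ω => (A ω, B ω, C ω)) ⁻¹' {x})).toReal)
    (fun x => ENNReal.toReal_nonneg) (fun a b c => ?_)
  have h1 := hfac a b c
  rwa [massC μ hA hB hC c, massAC μ hA hB hC a c, massBC μ hA hB hC b c] at h1

end RV

section CondIndep
variable {Ω : Type*} {mΩ : MeasurableSpace Ω} [StandardBorelSpace Ω]
variable {α β γ : Type*}
  [MeasurableSpace α] [DiscreteMeasurableSpace α]
  [MeasurableSpace β] [DiscreteMeasurableSpace β]
  [MeasurableSpace γ] [DiscreteMeasurableSpace γ]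

lemma condIndep_mass_factor
    (μ : Measure Ω) [IsFiniteMeasure μ]
    {A : Ω → α} {B : Ω → β} {C : Ω → γ}
    (hA : Measurable A) (hB : Measurable B) (hC : Measurable C)
    (h : CondIndepFun (MeasurableSpace.comap C inferInstance) hC.comap_le A B μ)
    (a : α) (b : β) (c : γ) :
    (μ (A ⁻¹' {a} ∩ B ⁻¹' {b} ∩ C ⁻¹' {c})).toReal * (μ (C ⁻¹' {c})).toReal
      = (μ (A ⁻¹' {a} ∩ C ⁻¹' {c})).toReal * (μ (B ⁻¹' {b} ∩ C ⁻¹' {c})).toReal := by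
  have hm' : MeasurableSpace.comap C inferInstance ≤ mΩ := hC.comap_le
  set S := C ⁻¹' {c} with hSdef
  have hSm' : MeasurableSet[MeasurableSpace.comap C inferInstance] S := ⟨{c}, MeasurableSet.singleton c, rfl⟩
  have hS : MeasurableSet[mΩ] S := hC (MeasurableSet.singleton c)
  by_cases hS0 : μ S = 0
  · have h1 : μ (A ⁻¹' {a} ∩ B ⁻¹' {b} ∩ S) = 0 :=
      measure_mono_null Set.inter_subset_right hS0
    have h2 : μ (A ⁻¹' {a} ∩ S) = 0 := measure_mono_null Set.inter_subset_right hS0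
    simp [h1, h2, hS0]
  · obtain ⟨ω₀, hω₀⟩ := MeasureTheory.nonempty_of_measure_ne_zero (μ := μ) hS0
    have hconst : ∀ (g : Ω → ℝ), StronglyMeasurable[MeasurableSpace.comap C inferInstance] g → ∀ ω ∈ S, g ω = g ω₀ := by
      intro g hmeas ω hω
      obtain ⟨U, hU, hUeq⟩ := hmeas.measurable (MeasurableSet.singleton (g ω₀))
      have hcU : C ω₀ ∈ U := by
        have : ω₀ ∈ C ⁻¹' U := by rw [hUeq]; exact rfl
        exact this
      have hCeq : C ω = C ω₀ := by
        have h1 : C ω = c := hω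
        have h2 : C ω₀ = c := hω₀
        rw [h1, h2]
      have : ω ∈ C ⁻¹' U := by rw [Set.mem_preimage, hCeq]; exact hcU
      rw [hUeq] at this
      exact this
    have hint : ∀ (g : Ω → ℝ), StronglyMeasurable[MeasurableSpace.comap C inferInstance] g →
        ∫ ω in S, g ω ∂μ = g ω₀ * (μ S).toReal := by
      intro g hmeas
      rw [setIntegral_congr_fun hS (fun ω hω => hconst g hmeas ω hω), setIntegral_const,
        smul_eq_mul, mul_comm, measureReal_def]
    have hAm : MeasurableSet[mΩ] (A ⁻¹' {a}) := hA (MeasurableSet.singleton a)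
    have hBm : MeasurableSet[mΩ] (B ⁻¹' {b}) := hB (MeasurableSet.singleton b)
    have heq := (condIndepFun_iff_condExp_inter_preimage_eq_mul (μ := μ) hA hB).1 h {a} {b}
      (MeasurableSet.singleton a) (MeasurableSet.singleton b)
    have key : ∀ (T : Set Ω), MeasurableSet[mΩ] T →
        ∫ ω in S, (μ⟦T | MeasurableSpace.comap C inferInstance⟧) ω ∂μ = (μ (T ∩ S)).toReal := by
      intro T hT
      rw [setIntegral_condExp hm' ((integrable_const (1:ℝ)).indicator hT) hSm',
        setIntegral_indicator hT, setIntegral_const, smul_eq_mul, mul_one,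
        Set.inter_comm S T, measureReal_def]
    have e1 : (μ (A ⁻¹' {a} ∩ S)).toReal
        = (μ⟦A ⁻¹' {a} | MeasurableSpace.comap C inferInstance⟧) ω₀ * (μ S).toReal := by
      rw [← key _ hAm, hint _ stronglyMeasurable_condExp]
    have e2 : (μ (B ⁻¹' {b} ∩ S)).toReal
        = (μ⟦B ⁻¹' {b} | MeasurableSpace.comap C inferInstance⟧) ω₀ * (μ S).toReal := by
      rw [← key _ hBm, hint _ stronglyMeasurable_condExp]
    have e12 : (μ (A ⁻¹' {a} ∩ B ⁻¹' {b} ∩ S)).toReal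
        = (μ⟦A ⁻¹' {a} | MeasurableSpace.comap C inferInstance⟧) ω₀
          * (μ⟦B ⁻¹' {b} | MeasurableSpace.comap C inferInstance⟧) ω₀ * (μ S).toReal := by
      rw [← key _ (hAm.inter hBm)]
      rw [setIntegral_congr_ae hS (heq.mono fun ω hω _ => hω)]
      rw [setIntegral_congr_fun hS (g := fun _ =>
        (μ⟦A ⁻¹' {a} | MeasurableSpace.comap C inferInstance⟧) ω₀
          * (μ⟦B ⁻¹' {b} | MeasurableSpace.comap C inferInstance⟧) ω₀)
        (fun ω hω => by
          rw [hconst _ stronglyMeasurable_condExp ω hω,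
            hconst _ stronglyMeasurable_condExp ω hω]),
        setIntegral_const, smul_eq_mul, mul_comm, measureReal_def]
    rw [e1, e2, e12]
    ring
end CondIndep

lemma indep_entropy_add {Ω α β : Type*} [MeasurableSpace Ω]
    [Fintype α] [MeasurableSpace α] [DiscreteMeasurableSpace α]
    [Fintype β] [MeasurableSpace β] [DiscreteMeasurableSpace β]
    (μ : Measure Ω) [IsProbabilityMeasure μ]
    {X : Ω → α} {Z : Ω → β} (hX : Measurable X) (hZ : Measurable Z)
    (h : IndepFun X Z μ) :
    entropy μ (fun ω => (X ω, Z ω)) = entropy μ X + entropy μ Z := by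
  have hmass : ∀ x y, (μ ((fun ω => (X ω, Z ω)) ⁻¹' {(x, y)})).toReal
      = (μ (X ⁻¹' {x})).toReal * (μ (Z ⁻¹' {y})).toReal := by
    intro x y
    have hset : (fun ω => (X ω, Z ω)) ⁻¹' {(x, y)} = X ⁻¹' {x} ∩ Z ⁻¹' {y} := by
      ext ω; simp [Prod.ext_iff]
    rw [hset, h.measure_inter_preimage_eq_mul _ _ (MeasurableSet.singleton x)
      (MeasurableSet.singleton y), ENNReal.toReal_mul]
  unfold entropy
  rw [Fintype.sum_prod_type]
  simp_rw [hmass, negMulLog_mul]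
  have h1 : ∀ x : α, ∑ y : β, ((μ (Z ⁻¹' {y})).toReal
        * negMulLog (μ (X ⁻¹' {x})).toReal
      + (μ (X ⁻¹' {x})).toReal * negMulLog (μ (Z ⁻¹' {y})).toReal)
      = negMulLog (μ (X ⁻¹' {x})).toReal
        + (μ (X ⁻¹' {x})).toReal * ∑ y : β, negMulLog (μ (Z ⁻¹' {y})).toReal := by
    intro x
    rw [Finset.sum_add_distrib, ← Finset.sum_mul, sum_mass μ hZ, one_mul, ← Finset.mul_sum]
  simp_rw [h1]
  rw [Finset.sum_add_distrib, ← Finset.sum_mul, sum_mass μ hX, one_mul]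



/-- Paper's Theorem 1: with `G_sub = f ∘ G_N`, if `G_n ⟂ Y` and `(Y, G_n) ⟂ G_N | G`, then
`I[G_sub : G_n] ≤ I[G_N : G_n] ≤ I[G_N : G] - I[G_N : Y]`. -/
theorem theorem1_perturbed_graph_info_bound
    {Ω : Type*} [MeasurableSpace Ω] [StandardBorelSpace Ω] [Nonempty Ω]
    (μ : Measure Ω) [IsProbabilityMeasure μ]
    {SG SY Sn SN Ssub : Type*}
    [Fintype SG] [Nonempty SG] [MeasurableSpace SG] [DiscreteMeasurableSpace SG]
    [Fintype SY] [Nonempty SY] [MeasurableSpace SY] [DiscreteMeasurableSpace SY]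
    [Fintype Sn] [Nonempty Sn] [MeasurableSpace Sn] [DiscreteMeasurableSpace Sn]
    [Fintype SN] [Nonempty SN] [MeasurableSpace SN] [DiscreteMeasurableSpace SN]
    [Fintype Ssub] [Nonempty Ssub] [MeasurableSpace Ssub] [DiscreteMeasurableSpace Ssub]
    (G : Ω → SG) (Y : Ω → SY) (Gn : Ω → Sn) (GN : Ω → SN) (f : SN → Ssub)
    (hG : Measurable G) (hY : Measurable Y) (hGn : Measurable Gn) (hGN : Measurable GN)
    (hf : Measurable f)
    (hindep : IndepFun Gn Y μ)
    (hcond : CondIndepFun (MeasurableSpace.comap G inferInstance) hG.comap_le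
      (fun ω => (Y ω, Gn ω)) GN μ) :
    mutualInfo μ (f ∘ GN) Gn ≤ mutualInfo μ GN Gn ∧
      mutualInfo μ GN Gn ≤ mutualInfo μ GN G - mutualInfo μ GN Y := by
  have hYn : Measurable (fun ω => (Y ω, Gn ω)) := hY.prodMk hGn
  constructor
  · -- Part 1: data processing
    have hcmi := condMI_nonneg μ hGN hGn (hf.comp hGN)
    have e1 : entropy μ (fun ω => (GN ω, Gn ω, (f ∘ GN) ω))
        = entropy μ (fun ω => (GN ω, Gn ω)) := by
      have hrw : (fun ω => (GN ω, Gn ω, (f ∘ GN) ω))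
          = (fun p : SN × Sn => (p.1, p.2, f p.1)) ∘ (fun ω => (GN ω, Gn ω)) := rfl
      rw [hrw]
      exact entropy_comp_injective μ _ (by
        intro p q h
        simp only [Prod.ext_iff] at h ⊢
        tauto)
    have e2 : entropy μ (fun ω => (GN ω, (f ∘ GN) ω)) = entropy μ GN := by
      have hrw : (fun ω => (GN ω, (f ∘ GN) ω)) = (fun x : SN => (x, f x)) ∘ GN := rfl
      rw [hrw]
      exact entropy_comp_injective μ _ (fun x y h => congrArg Prod.fst h)
    have e3 : entropy μ (fun ω => (Gn ω, (f ∘ GN) ω))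
        = entropy μ (fun ω => ((f ∘ GN) ω, Gn ω)) := by
      have hrw : (fun ω => (Gn ω, (f ∘ GN) ω))
          = Prod.swap ∘ (fun ω => ((f ∘ GN) ω, Gn ω)) := rfl
      rw [hrw]
      exact entropy_comp_injective μ _ Prod.swap_injective
    rw [e1, e2, e3] at hcmi
    unfold mutualInfo
    linarith
  · -- Part 2
    -- F1 : conditional independence kills I[(Y,Gn) : GN | G]
    have hfac : ∀ (a : SY × Sn) (b : SN) (c : SG),
        (μ ((fun ω => ((Y ω, Gn ω), GN ω, G ω)) ⁻¹' {(a, b, c)})).toReal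
            * (μ (G ⁻¹' {c})).toReal
          = (μ ((fun ω => ((Y ω, Gn ω), G ω)) ⁻¹' {(a, c)})).toReal
            * (μ ((fun ω => (GN ω, G ω)) ⁻¹' {(b, c)})).toReal := by
      intro a b c
      have hs1 : (fun ω => ((Y ω, Gn ω), GN ω, G ω)) ⁻¹' {(a, b, c)}
          = (fun ω => (Y ω, Gn ω)) ⁻¹' {a} ∩ GN ⁻¹' {b} ∩ G ⁻¹' {c} := by
        ext ω; simp [Prod.ext_iff, and_assoc]
      have hs2 : (fun ω => ((Y ω, Gn ω), G ω)) ⁻¹' {(a, c)}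
          = (fun ω => (Y ω, Gn ω)) ⁻¹' {a} ∩ G ⁻¹' {c} := by
        ext ω; simp [Prod.ext_iff]
      have hs3 : (fun ω => (GN ω, G ω)) ⁻¹' {(b, c)} = GN ⁻¹' {b} ∩ G ⁻¹' {c} := by
        ext ω; simp [Prod.ext_iff]
      rw [hs1, hs2, hs3]
      exact condIndep_mass_factor μ hYn hGN hG hcond a b c
    have F1 := condMI_eq μ hYn hGN hG hfac
    -- F2 : CMI nonneg for (GN ; G | (Y,Gn))
    have F2 := condMI_nonneg μ hGN hG hYn
    -- F4 : CMI nonneg for (Gn ; Y | GN)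
    have F4 := condMI_nonneg μ hGn hY hGN
    -- F5 : independence
    have F5 : entropy μ (fun ω => (Gn ω, Y ω)) = entropy μ Gn + entropy μ Y :=
      indep_entropy_add μ hGn hY hindep
    -- reorderings
    have r1 : entropy μ (fun ω => (GN ω, G ω, (Y ω, Gn ω)))
        = entropy μ (fun ω => ((Y ω, Gn ω), GN ω, G ω)) := by
      have hrw : (fun ω => (GN ω, G ω, (Y ω, Gn ω)))
          = (fun x : (SY × Sn) × SN × SG => (x.2.1, x.2.2, x.1))
            ∘ (fun ω => ((Y ω, Gn ω), GN ω, G ω)) := rfl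
      rw [hrw]
      exact entropy_comp_injective μ _ (by
        intro p q h
        simp only [Prod.ext_iff] at h ⊢
        tauto)
    have r2 : entropy μ (fun ω => (G ω, (Y ω, Gn ω)))
        = entropy μ (fun ω => ((Y ω, Gn ω), G ω)) := by
      have hrw : (fun ω => (G ω, (Y ω, Gn ω)))
          = Prod.swap ∘ (fun ω => ((Y ω, Gn ω), G ω)) := rfl
      rw [hrw]
      exact entropy_comp_injective μ _ Prod.swap_injective
    have r3 : entropy μ (fun ω => (Gn ω, Y ω, GN ω))
        = entropy μ (fun ω => (GN ω, (Y ω, Gn ω))) := by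
      have hrw : (fun ω => (Gn ω, Y ω, GN ω))
          = (fun x : SN × SY × Sn => (x.2.2, x.2.1, x.1))
            ∘ (fun ω => (GN ω, (Y ω, Gn ω))) := rfl
      rw [hrw]
      exact entropy_comp_injective μ _ (by
        intro p q h
        simp only [Prod.ext_iff] at h ⊢
        tauto)
    have r5 : entropy μ (fun ω => (Gn ω, GN ω))
        = entropy μ (fun ω => (GN ω, Gn ω)) := by
      have hrw : (fun ω => (Gn ω, GN ω))
          = Prod.swap ∘ (fun ω => (GN ω, Gn ω)) := rfl
      rw [hrw]
      exact entropy_comp_injective μ _ Prod.swap_injective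
    have r6 : entropy μ (fun ω => (Y ω, GN ω))
        = entropy μ (fun ω => (GN ω, Y ω)) := by
      have hrw : (fun ω => (Y ω, GN ω))
          = Prod.swap ∘ (fun ω => (GN ω, Y ω)) := rfl
      rw [hrw]
      exact entropy_comp_injective μ _ Prod.swap_injective
    have r7 : entropy μ (fun ω => (Y ω, Gn ω))
        = entropy μ (fun ω => (Gn ω, Y ω)) := by
      have hrw : (fun ω => (Y ω, Gn ω))
          = Prod.swap ∘ (fun ω => (Gn ω, Y ω)) := rfl
      rw [hrw]
      exact entropy_comp_injective μ _ Prod.swap_injective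
    rw [r1, r2] at F2
    rw [r3, r5, r6] at F4
    unfold mutualInfo
    rw [r7] at F2
    linarith
end

section
/- Let X, Y be random variables on a probability space (Ω, ℱ, ℙ) taking values in nonempty finite types α and β, and let q : α → β → ℝ satisfy q a b > 0 and ∑_{b : β} q a b = 1 for every a. Then H[Y|X] ≤ 𝔼_ℙ[−log q (X ω) (Y ω)], and consequently −I[X : Y] ≤ 𝔼_ℙ[−log q (X ω) (Y ω)]. (The variational upper bound, Eq. 9 of the paper: the negative mutual information −I(G_N, Y) is bounded by the expected cross-entropy loss of any variational classifier q(Y|G_N).) -/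
open MeasureTheory ProbabilityTheory Real

/-- Conditional entropy `H[Y|X] = H[⟨X, Y⟩] - H[X]`. -/
noncomputable def condEntropy {Ω S T : Type*} [MeasurableSpace Ω] [Fintype S] [Fintype T]
    (μ : Measure Ω) (X : Ω → S) (Y : Ω → T) : ℝ :=
  entropy μ (fun ω => (X ω, Y ω)) - entropy μ X

/-- Pointwise Gibbs inequality. -/
lemma gibbs_pt {x r : ℝ} (hx : 0 < x) (hr : 0 < r) :
    Real.negMulLog x + x * Real.log r ≤ r - x := by
  have h := Real.log_le_sub_one_of_pos (div_pos hr hx)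
  rw [Real.log_div hr.ne' hx.ne'] at h
  have h2 := mul_le_mul_of_nonneg_left h hx.le
  have hxr : x * (r / x) = r := by field_simp
  simp only [Real.negMulLog, neg_mul]
  nlinarith [h2, hxr]

/-- Variational upper bound (paper's Eq. 9): for any variational conditional distribution
`q` (with `q a b > 0` and `∑ b, q a b = 1`), the conditional entropy `H[Y|X]` — and hence
`-I[X : Y]` — is bounded above by the expected cross-entropy `𝔼[-log q (X ω) (Y ω)]`. -/
theorem condEntropy_le_crossEntropy_and_neg_mutualInfo_le
    {Ω : Type*} [MeasurableSpace Ω]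
    (μ : Measure Ω) [IsProbabilityMeasure μ]
    {α β : Type*}
    [Fintype α] [Nonempty α] [MeasurableSpace α] [DiscreteMeasurableSpace α]
    [Fintype β] [Nonempty β] [MeasurableSpace β] [DiscreteMeasurableSpace β]
    (X : Ω → α) (Y : Ω → β) (hX : Measurable X) (hY : Measurable Y)
    (q : α → β → ℝ) (hq_pos : ∀ a b, 0 < q a b) (hq_sum : ∀ a, ∑ b : β, q a b = 1) :
    condEntropy μ X Y ≤ ∫ ω, -Real.log (q (X ω) (Y ω)) ∂μ ∧
      -mutualInfo μ X Y ≤ ∫ ω, -Real.log (q (X ω) (Y ω)) ∂μ := by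
  classical
  set Z : Ω → α × β := fun ω => (X ω, Y ω) with hZdef
  have hZm : Measurable Z := hX.prodMk hY
  set p : α × β → ℝ := fun s => (μ (Z ⁻¹' {s})).toReal with hpdef
  set pX : α → ℝ := fun a => (μ (X ⁻¹' {a})).toReal with hpXdef
  have hp0 : ∀ s, 0 ≤ p s := fun s => ENNReal.toReal_nonneg
  have hpX0 : ∀ a, 0 ≤ pX a := fun a => ENNReal.toReal_nonneg
  -- marginal
  have hmargE : ∀ a, μ (X ⁻¹' {a}) = ∑ b : β, μ (Z ⁻¹' {(a, b)}) := by
    intro a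
    have h := sum_measure_preimage_singleton (μ := μ)
      ({a} ×ˢ (Finset.univ : Finset β)) (f := Z)
      (fun s _ => hZm (measurableSet_singleton s))
    rw [Finset.sum_product, Finset.sum_singleton] at h
    have hset : (X ⁻¹' {a}) = Z ⁻¹' ↑({a} ×ˢ (Finset.univ : Finset β)) := by
      ext ω; simp [Z, eq_comm]
    rw [hset, ← h]
  have hmarg : ∀ a, pX a = ∑ b : β, p (a, b) := by
    intro a
    show (μ (X ⁻¹' {a})).toReal = ∑ b : β, p (a, b)
    rw [hmargE a, ENNReal.toReal_sum (fun b _ => measure_ne_top μ _)]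
  -- total mass
  have htot : ∑ s : α × β, p s = 1 := by
    have h := sum_measure_preimage_singleton (μ := μ)
      (Finset.univ : Finset (α × β)) (f := Z)
      (fun s _ => hZm (measurableSet_singleton s))
    simp only [Finset.coe_univ, Set.preimage_univ, measure_univ] at h
    calc ∑ s : α × β, p s = (∑ s : α × β, μ (Z ⁻¹' {s})).toReal := by
          rw [ENNReal.toReal_sum (fun s _ => measure_ne_top μ _)]
      _ = 1 := by rw [h]; simp
  have htotX : ∑ a : α, pX a = 1 := by
    calc ∑ a : α, pX a = ∑ a : α, ∑ b : β, p (a, b) :=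
          Finset.sum_congr rfl (fun a _ => hmarg a)
      _ = ∑ s : α × β, p s := (Fintype.sum_prod_type (fun s : α × β => p s)).symm
      _ = 1 := htot
  have hple : ∀ a b, p (a, b) ≤ pX a := by
    intro a b
    rw [hmarg a]
    exact Finset.single_le_sum (f := fun b => p (a, b)) (fun c _ => hp0 _)
      (Finset.mem_univ b)
  -- integral as a sum
  have hint : ∫ ω, -Real.log (q (X ω) (Y ω)) ∂μ
      = ∑ s : α × β, p s * (-Real.log (q s.1 s.2)) := by
    have hg : Measurable (fun s : α × β => -Real.log (q s.1 s.2)) :=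
      measurable_of_countable _
    have hprob : IsProbabilityMeasure (μ.map Z) :=
      Measure.isProbabilityMeasure_map hZm.aemeasurable
    have h1 : ∫ ω, -Real.log (q (X ω) (Y ω)) ∂μ
        = ∫ s, -Real.log (q s.1 s.2) ∂(μ.map Z) := by
      rw [integral_map hZm.aemeasurable hg.aestronglyMeasurable]
    rw [h1, integral_fintype _]
    refine Finset.sum_congr rfl (fun s _ => ?_)
    rw [Measure.real, Measure.map_apply hZm (measurableSet_singleton s)]
    simp [smul_eq_mul, p]
    exact .of_finite
  -- entropy of X as a double sum
  have hHX : entropy μ X = ∑ s : α × β, -(p s * Real.log (pX s.1)) := by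
    calc entropy μ X = ∑ a : α, ∑ b : β, -(p (a, b) * Real.log (pX a)) := by
          refine Finset.sum_congr rfl (fun a _ => ?_)
          simp only [Real.negMulLog, neg_mul]
          rw [Finset.sum_neg_distrib, ← Finset.sum_mul, ← hmarg a]
      _ = ∑ s : α × β, -(p s * Real.log (pX s.1)) :=
          (Fintype.sum_prod_type (fun s : α × β => -(p s * Real.log (pX s.1)))).symm
  -- the key Gibbs bound
  have hterm : ∀ s : α × β,
      Real.negMulLog (p s) + p s * (Real.log (pX s.1) + Real.log (q s.1 s.2))
        ≤ pX s.1 * q s.1 s.2 - p s := by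
    intro s
    rcases eq_or_lt_of_le (hp0 s) with h0 | hpos
    · rw [← h0]
      simp only [Real.negMulLog_zero, zero_mul, add_zero, sub_zero]
      exact mul_nonneg (hpX0 _) (hq_pos _ _).le
    · have hpXpos : 0 < pX s.1 := lt_of_lt_of_le hpos (hple s.1 s.2)
      have hrpos : 0 < pX s.1 * q s.1 s.2 := mul_pos hpXpos (hq_pos _ _)
      have := gibbs_pt hpos hrpos
      rwa [Real.log_mul hpXpos.ne' (hq_pos _ _).ne'] at this
  have hsumr : ∑ s : α × β, pX s.1 * q s.1 s.2 = 1 := by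
    calc ∑ s : α × β, pX s.1 * q s.1 s.2
        = ∑ a : α, ∑ b : β, pX a * q a b :=
          Fintype.sum_prod_type (fun s : α × β => pX s.1 * q s.1 s.2)
      _ = ∑ a : α, pX a * ∑ b : β, q a b := by
          refine Finset.sum_congr rfl (fun a _ => ?_); rw [Finset.mul_sum]
      _ = 1 := by simp only [hq_sum, mul_one]; exact htotX
  have hgibbs : ∑ s : α × β,
      (Real.negMulLog (p s) + p s * (Real.log (pX s.1) + Real.log (q s.1 s.2))) ≤ 0 := by
    calc ∑ s : α × β, (Real.negMulLog (p s)
            + p s * (Real.log (pX s.1) + Real.log (q s.1 s.2)))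
        ≤ ∑ s : α × β, (pX s.1 * q s.1 s.2 - p s) :=
          Finset.sum_le_sum (fun s _ => hterm s)
      _ = 0 := by rw [Finset.sum_sub_distrib, hsumr, htot, sub_self]
  -- first inequality
  have h1 : condEntropy μ X Y ≤ ∫ ω, -Real.log (q (X ω) (Y ω)) ∂μ := by
    rw [hint, condEntropy, hHX]
    have : entropy μ Z = ∑ s : α × β, Real.negMulLog (p s) := rfl
    rw [show entropy μ (fun ω => (X ω, Y ω)) = ∑ s : α × β, Real.negMulLog (p s) from rfl]
    have expand : ∑ s : α × β, Real.negMulLog (p s) - ∑ s : α × β, -(p s * Real.log (pX s.1))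
        - ∑ s : α × β, p s * (-Real.log (q s.1 s.2))
        = ∑ s : α × β,
          (Real.negMulLog (p s) + p s * (Real.log (pX s.1) + Real.log (q s.1 s.2))) := by
      rw [← Finset.sum_sub_distrib, ← Finset.sum_sub_distrib]
      refine Finset.sum_congr rfl (fun s _ => ?_)
      ring
    linarith [hgibbs, expand.symm.le, expand.le]
  refine ⟨h1, ?_⟩
  -- second inequality: -I = H[Y|X] - H[Y] ≤ H[Y|X]
  have hHY : 0 ≤ entropy μ Y := by
    refine Finset.sum_nonneg (fun b _ => Real.negMulLog_nonneg ENNReal.toReal_nonneg ?_)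
    exact ENNReal.toReal_le_of_le_ofReal one_pos.le (by simpa using prob_le_one)
  have : -mutualInfo μ X Y = condEntropy μ X Y - entropy μ Y := by
    rw [mutualInfo, condEntropy]; ring
  linarith
end

section
/- Let μ be a probability measure on a standard Borel space α, let κ be a Markov kernel from α to a standard Borel space β, and let ν be any probability measure on β. Then klDiv(μ ⊗ₘ κ, μ ×ₘ (μ.bind κ)) ≤ ∫ klDiv(κ a, ν) dμ(a). (Variational upper bound on mutual information used to derive Eq. 10 of the paper: the mutual information between the input and the stochastic representation, i.e., the KL divergence of the joint law from the product of its marginals, is bounded by the expected KL divergence of the conditional law to any fixed prior ν.) -/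
open MeasureTheory ProbabilityTheory Real
open scoped ENNReal NNReal Classical

/-- Kullback–Leibler divergence: `∫ log (dμ/dν) dμ` when `μ ≪ ν` and the log-likelihood
ratio is `μ`-integrable, and `+∞` otherwise. -/

noncomputable def klDiv {α : Type*} [MeasurableSpace α] (μ ν : Measure α) : ℝ≥0∞ :=
  if μ ≪ ν ∧ Integrable (llr μ ν) μ then ENNReal.ofReal (∫ x, llr μ ν x ∂μ) else ⊤

section AuxLemmas

lemma aux_ofReal_max_zero (x : ℝ) : ENNReal.ofReal (max x 0) = ENNReal.ofReal x := by
  rcases le_total x 0 with h | h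
  · simp [max_eq_right h, ENNReal.ofReal_of_nonpos h]
  · simp [max_eq_left h]

lemma aux_mul_neg_log_le_one {r : ℝ} (hr : 0 ≤ r) : r * (-log r) ≤ 1 := by
  rcases eq_or_lt_of_le hr with h0 | h0
  · simp [← h0]
  rcases le_or_gt 1 r with h1 | h1
  · have : -log r ≤ 0 := by simp [Real.log_nonneg h1]
    exact (mul_nonpos_of_nonneg_of_nonpos hr this).trans zero_le_one
  · have hlog : -log r = log r⁻¹ := by rw [Real.log_inv]
    have : log r⁻¹ ≤ r⁻¹ - 1 := Real.log_le_sub_one_of_pos (by positivity)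
    calc r * (-log r) ≤ r * (r⁻¹ - 1) := by
          rw [hlog]; exact mul_le_mul_of_nonneg_left this hr
      _ = 1 - r := by field_simp
      _ ≤ 1 := by linarith

/-- The negative part of the log-likelihood ratio between two probability measures has
integral at most `1`. -/
lemma aux_lintegral_ofReal_neg_llr_le {Ω : Type*} [MeasurableSpace Ω] (ρ τ : Measure Ω)
    [IsProbabilityMeasure ρ] [IsProbabilityMeasure τ] (h : ρ ≪ τ) :
    ∫⁻ x, ENNReal.ofReal (-(llr ρ τ x)) ∂ρ ≤ 1 := by
  rw [← lintegral_rnDeriv_mul h (f := fun x => ENNReal.ofReal (-(llr ρ τ x)))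
    (measurable_llr ρ τ).neg.ennreal_ofReal.aemeasurable]
  calc ∫⁻ x, ρ.rnDeriv τ x * ENNReal.ofReal (-(llr ρ τ x)) ∂τ
      ≤ ∫⁻ _, 1 ∂τ := by
        refine lintegral_mono_ae ?_
        filter_upwards [Measure.rnDeriv_lt_top ρ τ] with x hx
        have hd : ρ.rnDeriv τ x = ENNReal.ofReal ((ρ.rnDeriv τ x).toReal) :=
          (ENNReal.ofReal_toReal hx.ne).symm
        rw [llr_def, hd, ← ENNReal.ofReal_mul ENNReal.toReal_nonneg]
        calc ENNReal.ofReal ((ρ.rnDeriv τ x).toReal * -log (ρ.rnDeriv τ x).toReal)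
            ≤ ENNReal.ofReal 1 := ENNReal.ofReal_le_ofReal
              (aux_mul_neg_log_le_one ENNReal.toReal_nonneg)
          _ = 1 := ENNReal.ofReal_one
    _ = 1 := by simp

lemma aux_lintegral_ofReal_eq {Ω : Type*} [MeasurableSpace Ω] {ρ : Measure Ω} {f : Ω → ℝ}
    (hf : Integrable f ρ) :
    ∫⁻ x, ENNReal.ofReal (f x) ∂ρ = ENNReal.ofReal (∫ x, max (f x) 0 ∂ρ) :=
  calc ∫⁻ x, ENNReal.ofReal (f x) ∂ρ = ∫⁻ x, ENNReal.ofReal (max (f x) 0) ∂ρ :=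
        lintegral_congr fun x => (aux_ofReal_max_zero (f x)).symm
    _ = ENNReal.ofReal (∫ x, max (f x) 0 ∂ρ) :=
        (ofReal_integral_eq_lintegral_ofReal hf.pos_part
          (Filter.Eventually.of_forall fun x => le_max_right _ _)).symm

lemma aux_integral_max_zero_eq {Ω : Type*} [MeasurableSpace Ω] {ρ : Measure Ω} {f : Ω → ℝ}
    (hf : Integrable f ρ) :
    ∫ x, max (f x) 0 ∂ρ = (∫ x, f x ∂ρ) + ∫ x, max (-f x) 0 ∂ρ := by
  have h2 : Integrable (fun x => max (-f x) 0) ρ := hf.neg.pos_part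
  rw [← integral_add hf h2]
  refine integral_congr_ae (Filter.Eventually.of_forall fun x => ?_)
  rcases le_total (f x) 0 with h | h
  · simp [max_eq_right h, max_eq_left (neg_nonneg.mpr h)]
  · simp [max_eq_left h, max_eq_right (neg_nonpos.mpr h)]

/-- Gibbs' inequality: the Kullback–Leibler divergence is nonnegative. -/
lemma aux_integral_llr_nonneg {Ω : Type*} [MeasurableSpace Ω] {ρ τ : Measure Ω}
    [IsProbabilityMeasure ρ] [IsProbabilityMeasure τ] (h : ρ ≪ τ)
    (hint : Integrable (llr ρ τ) ρ) : 0 ≤ ∫ x, llr ρ τ x ∂ρ := by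
  have hexp : Integrable (fun x => exp (-llr ρ τ x)) ρ :=
    (Measure.integrable_toReal_rnDeriv (μ := τ) (ν := ρ)).congr (exp_neg_llr h).symm
  have hjensen : exp (∫ x, -llr ρ τ x ∂ρ) ≤ ∫ x, exp (-llr ρ τ x) ∂ρ := by
    have := convexOn_exp.map_integral_le (μ := ρ) (f := fun x => -llr ρ τ x)
      continuous_exp.continuousOn isClosed_univ
      (Filter.Eventually.of_forall fun _ => Set.mem_univ _) hint.neg ?_
    · exact this
    · exact hexp
  have h2 : ∫ x, exp (-llr ρ τ x) ∂ρ = ∫ x, (τ.rnDeriv ρ x).toReal ∂ρ :=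
    integral_congr_ae (exp_neg_llr h)
  have h3 : ∫ x, (τ.rnDeriv ρ x).toReal ∂ρ ≤ 1 := by
    have := Measure.setIntegral_toReal_rnDeriv_le (μ := τ) (ν := ρ) (s := Set.univ)
      (measure_ne_top τ _)
    simpa using this
  have : exp (∫ x, -llr ρ τ x ∂ρ) ≤ 1 := hjensen.trans (h2.trans_le h3)
  rw [Real.exp_le_one_iff, integral_neg, neg_nonpos] at this
  exact this

lemma aux_ofReal_sub_le (x y : ℝ) :
    ENNReal.ofReal (x - y) ≤ ENNReal.ofReal x + ENNReal.ofReal (-y) := by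
  calc ENNReal.ofReal (x - y) = ENNReal.ofReal (x + -y) := by ring_nf
    _ ≤ _ := ENNReal.ofReal_add_le

lemma aux_ofReal_norm_split (x : ℝ) :
    ENNReal.ofReal ‖x‖ = ENNReal.ofReal x + ENNReal.ofReal (-x) := by
  rcases le_total x 0 with h | h
  · simp [Real.norm_eq_abs, abs_of_nonpos h, ENNReal.ofReal_of_nonpos h]
  · simp [Real.norm_eq_abs, abs_of_nonneg h, ENNReal.ofReal_of_nonpos (neg_nonpos.mpr h)]

end AuxLemmas

/-- Variational upper bound on mutual information: the KL divergence of the joint law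
`μ ⊗ₘ κ` from the product of its marginals `μ ×ₘ (μ.bind κ)` is bounded by the expected
KL divergence of the conditional law `κ a` to any fixed prior `ν`. -/
theorem mutualInfo_le_integral_klDiv
    {α β : Type*} [MeasurableSpace α] [StandardBorelSpace α]
    [MeasurableSpace β] [StandardBorelSpace β]
    (μ : Measure α) [IsProbabilityMeasure μ] (κ : Kernel α β) [IsMarkovKernel κ]
    (ν : Measure β) [IsProbabilityMeasure ν] :
    klDiv (μ ⊗ₘ κ) (μ.prod (μ.bind fun a => κ a)) ≤ ∫⁻ a, klDiv (κ a) ν ∂μ := by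
  classical
  by_cases hfin : ∫⁻ a, klDiv (κ a) ν ∂μ = ⊤
  · rw [hfin]; exact le_top
  -- sets on which `klDiv (κ ·) ν` is infinite are `μ`-null
  have hnull : ∀ s : Set α, MeasurableSet s → (∀ a ∈ s, klDiv (κ a) ν = ⊤) → μ s = 0 := by
    intro s hs htop
    by_contra hpos
    refine hfin ?_
    refine top_le_iff.mp ?_
    calc (⊤ : ℝ≥0∞) = ⊤ * μ s := (ENNReal.top_mul hpos).symm
      _ = ∫⁻ a, s.indicator (fun _ => (⊤ : ℝ≥0∞)) a ∂μ := by
          rw [lintegral_indicator hs]; simp [mul_comm]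
      _ ≤ ∫⁻ a, klDiv (κ a) ν ∂μ := by
          refine lintegral_mono fun a => ?_
          by_cases ha : a ∈ s
          · simp [Set.indicator_of_mem ha, htop a ha]
          · simp [Set.indicator_of_notMem ha]
  -- a.e. absolute continuity of the conditionals
  have hA_meas : MeasurableSet {a | κ a ≪ ν} := by
    have := Kernel.measurableSet_absolutelyContinuous κ (Kernel.const α ν)
    simpa [Kernel.const_apply] using this
  have hA : ∀ᵐ a ∂μ, κ a ≪ ν := by
    rw [Filter.eventually_iff, mem_ae_iff]
    refine hnull _ hA_meas.compl fun a ha => ?_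
    rw [klDiv, if_neg]
    exact fun hc => ha hc.1
  -- the joint law and the second marginal
  set P : Measure (α × β) := μ ⊗ₘ κ with hPdef
  set m : Measure β := μ.bind (fun a => κ a) with hmdef
  have hm_apply : ∀ s : Set β, MeasurableSet s → m s = ∫⁻ a, κ a s ∂μ := by
    intro s hs
    rw [hmdef, Measure.bind_apply hs (Kernel.measurable κ).aemeasurable]
  have hm_prob : IsProbabilityMeasure m := by
    constructor
    rw [hm_apply _ MeasurableSet.univ]
    simp
  haveI := hm_prob
  have hm_ac : m ≪ ν := by
    refine Measure.AbsolutelyContinuous.mk fun s hs hs0 => ?_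
    rw [hm_apply s hs]
    rw [lintegral_congr_ae (hA.mono fun a ha => ha hs0)]
    simp
  -- a jointly measurable version of the conditional densities and log-densities
  set G : α × β → ℝ≥0∞ := fun p => Kernel.rnDeriv κ (Kernel.const α ν) p.1 p.2 with hGdef
  have hG : Measurable G := Kernel.measurable_rnDeriv κ (Kernel.const α ν)
  set LG : α × β → ℝ := fun p => log (G p).toReal with hLGdef
  have hLG : Measurable LG := (hG.ennreal_toReal).log
  have he : ∀ a, κ a ≪ ν → (fun b => LG (a, b)) =ᵐ[κ a] llr (κ a) ν := by
    intro a ha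
    have h1 : Kernel.rnDeriv κ (Kernel.const α ν) a =ᵐ[ν] (κ a).rnDeriv ν := by
      have := Kernel.rnDeriv_eq_rnDeriv_measure (κ := κ) (η := Kernel.const α ν) (a := a)
      simpa [Kernel.const_apply] using this
    filter_upwards [ha.ae_le h1] with b hb
    simp only [hLGdef, hGdef, llr_def, hb]
  -- the positive part of the conditional KL integrand
  set K : α → ℝ≥0∞ := fun a => ∫⁻ b, ENNReal.ofReal (LG (a, b)) ∂κ a with hKdef
  have hK_meas : Measurable K := Measurable.lintegral_kernel_prod_right' hLG.ennreal_ofReal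
  have hKtop : μ ({a | κ a ≪ ν} ∩ {a | K a = ⊤}) = 0 := by
    refine hnull _ (hA_meas.inter (hK_meas (measurableSet_singleton ⊤))) ?_
    rintro a ⟨ha, hKa⟩
    rw [klDiv, if_neg]
    rintro ⟨-, hint⟩
    have h1 : K a = ∫⁻ b, ENNReal.ofReal (llr (κ a) ν b) ∂κ a :=
      lintegral_congr_ae ((he a ha).mono fun b hb => congrArg _ hb)
    have h2 : ∫⁻ b, ENNReal.ofReal (llr (κ a) ν b) ∂κ a < ⊤ := by
      refine lt_of_le_of_lt (lintegral_mono fun b => ?_) hint.2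
      exact Real.ofReal_le_enorm _
    rw [← h1] at h2
    exact h2.ne hKa
  have hGood : ∀ᵐ a ∂μ, κ a ≪ ν ∧ K a ≠ ⊤ := by
    have h2 : ∀ᵐ a ∂μ, a ∉ {a | κ a ≪ ν} ∩ {a | K a = ⊤} :=
      (measure_eq_zero_iff_ae_notMem).mp hKtop
    filter_upwards [hA, h2] with a ha hn
    exact ⟨ha, fun hK => hn ⟨ha, hK⟩⟩
  -- integrability of the conditional log-likelihood ratios
  have hint_a : ∀ᵐ a ∂μ, κ a ≪ ν ∧ Integrable (llr (κ a) ν) (κ a) ∧ K a ≠ ⊤ := by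
    filter_upwards [hGood] with a ⟨ha, hKa⟩
    refine ⟨ha, ⟨(stronglyMeasurable_llr _ _).aestronglyMeasurable, ?_⟩, hKa⟩
    rw [hasFiniteIntegral_iff_norm]
    calc ∫⁻ b, ENNReal.ofReal ‖llr (κ a) ν b‖ ∂κ a
        = ∫⁻ b, (ENNReal.ofReal (llr (κ a) ν b) + ENNReal.ofReal (-(llr (κ a) ν b))) ∂κ a :=
          lintegral_congr fun b => aux_ofReal_norm_split _
      _ = (∫⁻ b, ENNReal.ofReal (llr (κ a) ν b) ∂κ a)
          + ∫⁻ b, ENNReal.ofReal (-(llr (κ a) ν b)) ∂κ a := by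
          rw [lintegral_add_left ((measurable_llr _ _).ennreal_ofReal)]
      _ < ⊤ := by
          have h1 : ∫⁻ b, ENNReal.ofReal (llr (κ a) ν b) ∂κ a = K a :=
            (lintegral_congr_ae ((he a ha).mono fun b hb => congrArg _ hb)).symm
          have h2 := aux_lintegral_ofReal_neg_llr_le (κ a) ν ha
          rw [h1]
          exact ENNReal.add_lt_top.mpr ⟨hKa.lt_top, lt_of_le_of_lt h2 (by norm_num)⟩
  -- the expected conditional log-likelihood ratio
  set F : α → ℝ := fun a => ∫ b, LG (a, b) ∂κ a with hFdef
  have hF_meas : StronglyMeasurable F :=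
    hLG.stronglyMeasurable.integral_kernel_prod_right'
  have hae : ∀ᵐ a ∂μ, klDiv (κ a) ν = ENNReal.ofReal (F a)
      ∧ K a ≤ ENNReal.ofReal (F a) + 1
      ∧ ∫⁻ b, ENNReal.ofReal ‖LG (a, b)‖ ∂κ a ≤ ENNReal.ofReal (F a) + 2 := by
    filter_upwards [hint_a] with a ⟨ha, hint, hKa⟩
    have hFa : F a = ∫ b, llr (κ a) ν b ∂κ a := integral_congr_ae (he a ha)
    have hkl : klDiv (κ a) ν = ENNReal.ofReal (F a) := by
      rw [klDiv, if_pos ⟨ha, hint⟩, hFa]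
    have hKa_eq : K a = ∫⁻ b, ENNReal.ofReal (llr (κ a) ν b) ∂κ a := by
      rw [hKdef]
      exact lintegral_congr_ae ((he a ha).mono fun b hb => congrArg _ hb)
    have hneg : ∫⁻ b, ENNReal.ofReal (-(llr (κ a) ν b)) ∂κ a ≤ 1 :=
      aux_lintegral_ofReal_neg_llr_le (κ a) ν ha
    have hint_neg : Integrable (fun b => -(llr (κ a) ν b)) (κ a) := hint.neg
    have hnegR : ENNReal.ofReal (∫ b, max (-(llr (κ a) ν b)) 0 ∂κ a) ≤ 1 := by
      rw [← aux_lintegral_ofReal_eq hint_neg]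
      exact hneg
    have hKle : K a ≤ ENNReal.ofReal (F a) + 1 := by
      rw [hKa_eq, aux_lintegral_ofReal_eq hint, aux_integral_max_zero_eq hint, hFa]
      calc ENNReal.ofReal ((∫ b, llr (κ a) ν b ∂κ a) + ∫ b, max (-(llr (κ a) ν b)) 0 ∂κ a)
          ≤ ENNReal.ofReal (∫ b, llr (κ a) ν b ∂κ a)
            + ENNReal.ofReal (∫ b, max (-(llr (κ a) ν b)) 0 ∂κ a) := ENNReal.ofReal_add_le
        _ ≤ ENNReal.ofReal (∫ b, llr (κ a) ν b ∂κ a) + 1 := by gcongr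
    refine ⟨hkl, hKle, ?_⟩
    calc ∫⁻ b, ENNReal.ofReal ‖LG (a, b)‖ ∂κ a
        = ∫⁻ b, (ENNReal.ofReal (LG (a, b)) + ENNReal.ofReal (-(LG (a, b)))) ∂κ a :=
          lintegral_congr fun b => aux_ofReal_norm_split _
      _ = K a + ∫⁻ b, ENNReal.ofReal (-(LG (a, b))) ∂κ a := by
          have hm : Measurable fun b => ENNReal.ofReal (LG (a, b)) :=
            (hLG.comp measurable_prodMk_left).ennreal_ofReal
          rw [lintegral_add_left hm, hKdef]
      _ ≤ (ENNReal.ofReal (F a) + 1) + 1 := by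
          refine add_le_add hKle ?_
          calc ∫⁻ b, ENNReal.ofReal (-(LG (a, b))) ∂κ a
              = ∫⁻ b, ENNReal.ofReal (-(llr (κ a) ν b)) ∂κ a :=
                lintegral_congr_ae ((he a ha).mono fun b hb =>
                  congrArg (fun r : ℝ => ENNReal.ofReal (-r)) hb)
            _ ≤ 1 := hneg
      _ = ENNReal.ofReal (F a) + 2 := by ring
  have hRHS : ∫⁻ a, klDiv (κ a) ν ∂μ = ∫⁻ a, ENNReal.ofReal (F a) ∂μ :=
    lintegral_congr_ae (hae.mono fun a h => h.1)
  have hRHS_fin : ∫⁻ a, ENNReal.ofReal (F a) ∂μ ≠ ⊤ := hRHS ▸ hfin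
  -- integrability of the joint log-density
  have hLGint : Integrable LG P := by
    refine ⟨hLG.aestronglyMeasurable, ?_⟩
    rw [hasFiniteIntegral_iff_norm, hPdef, Measure.lintegral_compProd hLG.norm.ennreal_ofReal]
    calc ∫⁻ a, ∫⁻ b, ENNReal.ofReal ‖LG (a, b)‖ ∂κ a ∂μ
        ≤ ∫⁻ a, (ENNReal.ofReal (F a) + 2) ∂μ :=
          lintegral_mono_ae (hae.mono fun a h => h.2.2)
      _ = (∫⁻ a, ENNReal.ofReal (F a) ∂μ) + 2 := by
          rw [lintegral_add_right _ measurable_const, lintegral_const, measure_univ, mul_one]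
      _ < ⊤ := ENNReal.add_lt_top.mpr ⟨hRHS_fin.lt_top, by norm_num⟩
  have hF_int : Integrable F μ := by
    have h1 := (Measure.integrable_compProd_iff hLG.aestronglyMeasurable).mp hLGint
    refine h1.2.mono hF_meas.aestronglyMeasurable ?_
    refine Filter.Eventually.of_forall fun a => ?_
    calc ‖F a‖ ≤ ∫ b, ‖LG (a, b)‖ ∂κ a := norm_integral_le_integral_norm _
      _ ≤ ‖∫ b, ‖LG (a, b)‖ ∂κ a‖ := le_abs_self _
  have hintegral : ∫ p, LG p ∂P = ∫ a, F a ∂μ := Measure.integral_compProd hLGint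
  -- the product measure μ × m as a density over μ × ν
  set H : α × β → ℝ≥0∞ := fun p => m.rnDeriv ν p.2 with hHdef
  have hH : Measurable H := (Measure.measurable_rnDeriv m ν).comp measurable_snd
  have hprodm : μ.prod m = (μ.prod ν).withDensity H := by
    ext s hs
    rw [withDensity_apply _ hs, Measure.prod_apply hs, ← lintegral_indicator hs,
      lintegral_prod _ (hH.indicator hs).aemeasurable]
    refine lintegral_congr fun a => ?_
    have : ∀ b, s.indicator H (a, b)
        = (Prod.mk a ⁻¹' s).indicator (fun b => m.rnDeriv ν b) b := by
      intro b
      simp [Set.indicator_apply, Set.mem_preimage, hHdef]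
    rw [lintegral_congr this, lintegral_indicator (measurable_prodMk_left hs),
      Measure.setLIntegral_rnDeriv hm_ac]
  have hmprod_ac : μ.prod m ≪ μ.prod ν := by
    rw [hprodm]; exact withDensity_absolutelyContinuous _ _
  have hD3 : (μ.prod m).rnDeriv (μ.prod ν) =ᵐ[μ.prod ν] H := by
    rw [hprodm]; exact Measure.rnDeriv_withDensity _ hH
  -- the joint law as a density over μ × ν
  have hPeq : P = (μ.prod ν).withDensity G := by
    ext s hs
    rw [withDensity_apply _ hs, hPdef, Measure.compProd_apply hs, ← lintegral_indicator hs,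
      lintegral_prod _ (hG.indicator hs).aemeasurable]
    refine (lintegral_congr_ae (hA.mono fun a ha => ?_)).symm
    have h1 : ∀ b, s.indicator G (a, b)
        = (Prod.mk a ⁻¹' s).indicator (fun b => Kernel.rnDeriv κ (Kernel.const α ν) a b) b := by
      intro b
      simp [Set.indicator_apply, Set.mem_preimage, hGdef]
    rw [lintegral_congr h1, lintegral_indicator (measurable_prodMk_left hs)]
    have h2 : ν.withDensity (Kernel.rnDeriv κ (Kernel.const α ν) a) = κ a := by
      have h3 : κ a ≪ (Kernel.const α ν) a := by rwa [Kernel.const_apply]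
      have := Kernel.withDensity_rnDeriv_eq h3
      rwa [Kernel.withDensity_apply _ (Kernel.measurable_rnDeriv κ (Kernel.const α ν)),
        Kernel.const_apply] at this
    rw [← h2, withDensity_apply _ (measurable_prodMk_left hs)]
  have hPac : P ≪ μ.prod ν := by
    rw [hPeq]; exact withDensity_absolutelyContinuous _ _
  have hD1 : P.rnDeriv (μ.prod ν) =ᵐ[μ.prod ν] G := by
    rw [hPeq]; exact Measure.rnDeriv_withDensity _ hG
  -- the set where the marginal density vanishes is P-null
  set t : Set β := {b | m.rnDeriv ν b = 0} with htdef
  have ht : MeasurableSet t := Measure.measurable_rnDeriv m ν (measurableSet_singleton 0)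
  have hmt : m t = 0 := by
    conv_lhs => rw [← Measure.withDensity_rnDeriv_eq m ν hm_ac]
    rw [withDensity_apply _ ht]
    calc ∫⁻ b in t, m.rnDeriv ν b ∂ν = ∫⁻ b in t, 0 ∂ν :=
          setLIntegral_congr_fun ht (fun b hb => hb)
      _ = 0 := lintegral_zero
  have hPt : P {p | H p = 0} = 0 := by
    have hset : {p : α × β | H p = 0} = Set.univ ×ˢ t := by
      ext p; simp [hHdef, htdef]
    rw [hset, hPdef, Measure.compProd_apply (MeasurableSet.univ.prod ht)]
    calc ∫⁻ a, κ a (Prod.mk a ⁻¹' (Set.univ ×ˢ t)) ∂μ = ∫⁻ a, κ a t ∂μ := by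
          refine lintegral_congr fun a => ?_
          congr 1
          ext b; simp
      _ = m t := (hm_apply t ht).symm
      _ = 0 := hmt
  -- absolute continuity of the joint law wrt μ × m
  have hPm : P ≪ μ.prod m := by
    refine Measure.AbsolutelyContinuous.mk fun s hs hs0 => ?_
    rw [hprodm, withDensity_apply _ hs] at hs0
    have h1 : (μ.prod ν) ({p | H p ≠ 0} ∩ s) = 0 := by
      have hae0 : ∀ᵐ p ∂(μ.prod ν), p ∈ s → H p = 0 := (setLIntegral_eq_zero_iff hs hH).mp hs0
      refine measure_mono_null (fun p hp => ?_) (ae_iff.mp hae0)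
      simp only [Set.mem_setOf_eq, Classical.not_imp]
      exact ⟨hp.2, hp.1⟩
    refine le_antisymm ?_ zero_le
    calc P s ≤ P (({p | H p ≠ 0} ∩ s) ∪ {p | H p = 0}) := by
          refine measure_mono fun p hp => ?_
          by_cases hH0 : H p = 0
          · exact Or.inr hH0
          · exact Or.inl ⟨hH0, hp⟩
      _ ≤ P ({p | H p ≠ 0} ∩ s) + P {p | H p = 0} := measure_union_le _ _
      _ = 0 := by rw [hPac h1, hPt, add_zero]
  -- second marginal of the joint law
  have hsnd : P.map Prod.snd = m := by
    ext s hs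
    rw [Measure.map_apply measurable_snd hs, hPdef,
      Measure.compProd_apply (measurable_snd hs), hm_apply s hs]
    refine lintegral_congr fun a => ?_
    congr 1
  -- chain rule for the log-likelihood ratios
  set Z : α × β → ℝ := fun p => llr m ν p.2 with hZdef
  have hZmeas : Measurable Z := (measurable_llr m ν).comp measurable_snd
  have hchain : llr P (μ.prod m) =ᵐ[P] fun p => LG p - Z p := by
    have e1 : P.rnDeriv (μ.prod m) * (μ.prod m).rnDeriv (μ.prod ν)
        =ᵐ[μ.prod ν] P.rnDeriv (μ.prod ν) := Measure.rnDeriv_mul_rnDeriv hPm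
    filter_upwards [hPac.ae_le e1, hPac.ae_le hD1, hPac.ae_le hD3,
      Measure.rnDeriv_pos hPm, hPm.ae_le (Measure.rnDeriv_lt_top P (μ.prod m)),
      hPm.ae_le (Measure.rnDeriv_pos hmprod_ac),
      hPac.ae_le (Measure.rnDeriv_lt_top (μ.prod m) (μ.prod ν))]
      with p h1 h2 h3 h4 h5 h6 h7
    have hD2ne : (P.rnDeriv (μ.prod m) p).toReal ≠ 0 :=
      (ENNReal.toReal_pos h4.ne' h5.ne).ne'
    have hD3ne : ((μ.prod m).rnDeriv (μ.prod ν) p).toReal ≠ 0 :=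
      (ENNReal.toReal_pos h6.ne' h7.ne).ne'
    have hmul : (G p).toReal
        = (P.rnDeriv (μ.prod m) p).toReal * ((μ.prod m).rnDeriv (μ.prod ν) p).toReal := by
      rw [← h2, ← h1, Pi.mul_apply, ENNReal.toReal_mul]
    have hLGp : LG p = log (P.rnDeriv (μ.prod m) p).toReal
        + log ((μ.prod m).rnDeriv (μ.prod ν) p).toReal := by
      simp only [hLGdef]
      rw [hmul, Real.log_mul hD2ne hD3ne]
    have hZp : log ((μ.prod m).rnDeriv (μ.prod ν) p).toReal = Z p := by
      rw [h3]
      simp only [hHdef, hZdef, llr_def]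
    simp only [llr_def]
    rw [hLGp, hZp]
    ring
  -- integrability of Z with respect to P
  have hZneg_le : ∫⁻ p, ENNReal.ofReal (-(Z p)) ∂P ≤ 1 := by
    have h0 : ∫⁻ b, ENNReal.ofReal (-(llr m ν b)) ∂(P.map Prod.snd)
        = ∫⁻ p, ENNReal.ofReal (-(Z p)) ∂P :=
      lintegral_map (measurable_llr m ν).neg.ennreal_ofReal measurable_snd
    rw [hsnd] at h0
    rw [← h0]
    exact aux_lintegral_ofReal_neg_llr_le m ν hm_ac
  have hLG_fin : ∫⁻ p, ENNReal.ofReal (LG p) ∂P ≠ ⊤ := by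
    have h2 := hLGint.2
    rw [hasFiniteIntegral_iff_norm] at h2
    refine ne_of_lt (lt_of_le_of_lt (lintegral_mono fun p => ?_) h2)
    exact ENNReal.ofReal_le_ofReal (le_abs_self _)
  have hZpos_le : ∫⁻ p, ENNReal.ofReal (Z p) ∂P
      ≤ (∫⁻ p, ENNReal.ofReal (LG p) ∂P) + 1 := by
    calc ∫⁻ p, ENNReal.ofReal (Z p) ∂P
        ≤ ∫⁻ p, (ENNReal.ofReal (LG p) + ENNReal.ofReal (-(llr P (μ.prod m) p))) ∂P := by
          refine lintegral_mono_ae (hchain.mono fun p hp => ?_)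
          have : Z p = LG p - llr P (μ.prod m) p := by rw [hp]; ring
          rw [this]
          exact aux_ofReal_sub_le _ _
      _ = (∫⁻ p, ENNReal.ofReal (LG p) ∂P)
          + ∫⁻ p, ENNReal.ofReal (-(llr P (μ.prod m) p)) ∂P :=
          lintegral_add_left hLG.ennreal_ofReal _
      _ ≤ (∫⁻ p, ENNReal.ofReal (LG p) ∂P) + 1 := by
          gcongr
          exact aux_lintegral_ofReal_neg_llr_le P (μ.prod m) hPm
  have hZint : Integrable Z P := by
    refine ⟨hZmeas.aestronglyMeasurable, ?_⟩
    rw [hasFiniteIntegral_iff_norm]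
    calc ∫⁻ p, ENNReal.ofReal ‖Z p‖ ∂P
        = ∫⁻ p, (ENNReal.ofReal (Z p) + ENNReal.ofReal (-(Z p))) ∂P :=
          lintegral_congr fun p => aux_ofReal_norm_split _
      _ = (∫⁻ p, ENNReal.ofReal (Z p) ∂P) + ∫⁻ p, ENNReal.ofReal (-(Z p)) ∂P :=
          lintegral_add_left hZmeas.ennreal_ofReal _
      _ < ⊤ := by
          refine ENNReal.add_lt_top.mpr ⟨?_, lt_of_le_of_lt hZneg_le (by norm_num)⟩
          refine lt_of_le_of_lt hZpos_le ?_
          exact ENNReal.add_lt_top.mpr ⟨hLG_fin.lt_top, by norm_num⟩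
  have hZm_int : Integrable (llr m ν) m := by
    have h1 : AEStronglyMeasurable (llr m ν) (P.map Prod.snd) := by
      rw [hsnd]; exact (stronglyMeasurable_llr m ν).aestronglyMeasurable
    have h2 := (integrable_map_measure h1 measurable_snd.aemeasurable).mpr hZint
    rwa [hsnd] at h2
  have hllrint : Integrable (llr P (μ.prod m)) P :=
    (hLGint.sub hZint).congr hchain.symm
  have hZ_eq : ∫ p, Z p ∂P = ∫ b, llr m ν b ∂m := by
    have h1 : AEStronglyMeasurable (llr m ν) (P.map Prod.snd) := by
      rw [hsnd]; exact (stronglyMeasurable_llr m ν).aestronglyMeasurable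
    have h2 := integral_map (φ := Prod.snd) measurable_snd.aemeasurable h1
    rw [hsnd] at h2
    exact h2.symm
  have hGibbs : 0 ≤ ∫ b, llr m ν b ∂m := aux_integral_llr_nonneg hm_ac hZm_int
  have hkey : ∫ p, llr P (μ.prod m) p ∂P ≤ ∫ a, F a ∂μ := by
    calc ∫ p, llr P (μ.prod m) p ∂P = ∫ p, (LG p - Z p) ∂P := integral_congr_ae hchain
      _ = (∫ p, LG p ∂P) - ∫ p, Z p ∂P := integral_sub hLGint hZint
      _ ≤ ∫ p, LG p ∂P := by
          rw [hZ_eq]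
          linarith
      _ = ∫ a, F a ∂μ := hintegral
  calc klDiv P (μ.prod m) = ENNReal.ofReal (∫ p, llr P (μ.prod m) p ∂P) := by
        rw [klDiv, if_pos ⟨hPm, hllrint⟩]
    _ ≤ ENNReal.ofReal (∫ a, F a ∂μ) := ENNReal.ofReal_le_ofReal hkey
    _ ≤ ENNReal.ofReal (∫ a, max (F a) 0 ∂μ) := by
        refine ENNReal.ofReal_le_ofReal ?_
        exact integral_mono hF_int hF_int.pos_part fun a => le_max_left _ _
    _ = ∫⁻ a, ENNReal.ofReal (F a) ∂μ := (aux_lintegral_ofReal_eq hF_int).symm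
    _ = ∫⁻ a, klDiv (κ a) ν ∂μ := hRHS.symm
end

section
/- Let m ≥ 1, μ_h ∈ ℝ, σ_h > 0, and let λ : Fin m → ℝ take values in {0, 1} and h : Fin m → ℝ. Set A = ∑_j (1 − λ_j)², B = (∑_j λ_j (h_j − μ_h)) / σ_h, and μ_Z = (1/m)(∑_j λ_j h_j + (∑_j (1 − λ_j)) μ_h), and assume A > 0. Then klDiv(gaussianReal μ_Z (σ_h² A / m²), gaussianReal μ_h (σ_h² / m)) = −(1/2) log A + A/(2m) + B²/(2m) + (1/2) log m − 1/2. (The core computation of the paper's Proposition 1: the per-graph KL term equals −½ log A_G + A_G/(2m_G) + B_G²/(2m_G) up to the constant ½ log m − ½.) -/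
open MeasureTheory ProbabilityTheory Real
open scoped ENNReal NNReal Classical

lemma integral_mul_exp_neg_mul_sq_eq_zero {b : ℝ} (hb : 0 < b) :
    ∫ x : ℝ, x * rexp (-b * x ^ 2) = 0 := by
  have h := (Measure.measurePreserving_neg (volume : Measure ℝ)).integral_comp
    (Homeomorph.neg ℝ).measurableEmbedding (fun x : ℝ => x * rexp (-b * x ^ 2))
  simp only [neg_mul] at h ⊢
  have h2 : ∫ x : ℝ, -(x * rexp (-(b * x ^ 2))) = ∫ x : ℝ, x * rexp (-(b * x ^ 2)) := by
    rw [← h]; congr 1; ext x; simp [Homeomorph.neg]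
  rw [integral_neg] at h2
  linarith

lemma integral_sq_mul_exp_neg_mul_sq {b : ℝ} (hb : 0 < b) :
    ∫ x : ℝ, x ^ 2 * rexp (-b * x ^ 2) = Real.sqrt (π / b) / (2 * b) := by
  have habs : ∫ x : ℝ, x ^ 2 * rexp (-b * x ^ 2)
      = ∫ x : ℝ, |x| ^ 2 * rexp (-b * |x| ^ 2) := by
    congr 1; ext x; rw [sq_abs]
  rw [habs, integral_comp_abs (f := fun x => x ^ 2 * rexp (-b * x ^ 2))]
  have h := integral_rpow_mul_exp_neg_mul_rpow (p := 2) (q := 2) (b := b)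
    two_pos (by norm_num) hb
  have hconv : ∫ x in Set.Ioi (0:ℝ), x ^ (2:ℝ) * rexp (-b * x ^ (2:ℝ))
      = ∫ x in Set.Ioi (0:ℝ), x ^ 2 * rexp (-b * x ^ 2) := by
    refine setIntegral_congr_fun measurableSet_Ioi (fun x hx => ?_)
    rw [← Real.rpow_natCast x 2]; norm_num
  rw [hconv] at h
  rw [h]
  have hb' : b ≠ 0 := hb.ne'
  have hsb : Real.sqrt b ≠ 0 := (Real.sqrt_pos.mpr hb).ne'
  have h1 : b ^ (-((2:ℝ) + 1) / 2) = (Real.sqrt b * b)⁻¹ := by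
    have : -((2:ℝ) + 1) / 2 = -(1/2 + 1) := by norm_num
    rw [this, Real.rpow_neg hb.le, Real.rpow_add hb, Real.rpow_one, ← Real.sqrt_eq_rpow]
  have hG : Real.Gamma ((2 + 1) / 2) = Real.sqrt π / 2 := by
    have : ((2:ℝ) + 1) / 2 = 1/2 + 1 := by norm_num
    rw [this, Real.Gamma_add_one (by norm_num), Real.Gamma_one_half_eq]
    ring
  rw [h1, hG, Real.sqrt_div Real.pi_nonneg]
  field_simp

lemma integrable_sq_mul_exp_neg_mul_sq {b : ℝ} (hb : 0 < b) :
    Integrable (fun x : ℝ => x ^ 2 * rexp (-b * x ^ 2)) := by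
  have h := integrable_rpow_mul_exp_neg_mul_sq hb (s := 2) (by norm_num)
  refine h.congr (Filter.Eventually.of_forall fun x => ?_)
  show x ^ (2:ℝ) * rexp (-b * x ^ 2) = x ^ 2 * rexp (-b * x ^ 2)
  rw [show (2:ℝ) = ((2:ℕ):ℝ) by norm_num, Real.rpow_natCast]

lemma gauss_poly_integrable {v : ℝ} (hv : 0 < v) (m α β γ : ℝ) :
    Integrable (fun x : ℝ => (α * (x - m) ^ 2 + β * (x - m) + γ)
      * rexp (-(x - m) ^ 2 / (2 * v))) := by
  have hb : 0 < (2 * v)⁻¹ := by positivity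
  have h0 := integrable_exp_neg_mul_sq hb
  have h1 := integrable_mul_exp_neg_mul_sq hb
  have h2 := integrable_sq_mul_exp_neg_mul_sq hb
  have hg : Integrable (fun y : ℝ => (α * y ^ 2 + β * y + γ) * rexp (-(2 * v)⁻¹ * y ^ 2)) := by
    refine (((h2.const_mul α).add (h1.const_mul β)).add (h0.const_mul γ)).congr
      (Filter.Eventually.of_forall fun x => ?_)
    simp only [Pi.add_apply]
    ring
  have := hg.comp_sub_right m
  refine this.congr (Filter.Eventually.of_forall fun x => ?_)
  congr 1
  ring_nf

lemma gauss_poly_integral {v : ℝ} (hv : 0 < v) (m α β γ : ℝ) :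
    ∫ x : ℝ, (α * (x - m) ^ 2 + β * (x - m) + γ)
      * ((Real.sqrt (2 * π * v))⁻¹ * rexp (-(x - m) ^ 2 / (2 * v))) = α * v + γ := by
  have hb : 0 < (2 * v)⁻¹ := by positivity
  have h0 := integrable_exp_neg_mul_sq hb
  have h1 := integrable_mul_exp_neg_mul_sq hb
  have h2 := integrable_sq_mul_exp_neg_mul_sq hb
  have hkey : ∫ x : ℝ, (α * (x - m) ^ 2 + β * (x - m) + γ)
        * ((Real.sqrt (2 * π * v))⁻¹ * rexp (-(x - m) ^ 2 / (2 * v)))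
      = ∫ y : ℝ, (Real.sqrt (2 * π * v))⁻¹
          * ((α * y ^ 2 + β * y + γ) * rexp (-(2 * v)⁻¹ * y ^ 2)) := by
    rw [← integral_sub_right_eq_self (fun y : ℝ => (Real.sqrt (2 * π * v))⁻¹
          * ((α * y ^ 2 + β * y + γ) * rexp (-(2 * v)⁻¹ * y ^ 2))) m]
    congr 1; ext x; rw [show -(2 * v)⁻¹ * (x - m) ^ 2 = -(x - m) ^ 2 / (2 * v) by ring]; ring
  rw [hkey, integral_const_mul]
  have hexp : ∫ y : ℝ, (α * y ^ 2 + β * y + γ) * rexp (-(2 * v)⁻¹ * y ^ 2)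
      = α * (Real.sqrt (π / (2 * v)⁻¹) / (2 * (2 * v)⁻¹)) + (β * 0
        + γ * Real.sqrt (π / (2 * v)⁻¹)) := by
    have e1 : (fun y : ℝ => (α * y ^ 2 + β * y + γ) * rexp (-(2 * v)⁻¹ * y ^ 2))
        = fun y : ℝ => α * (y ^ 2 * rexp (-(2 * v)⁻¹ * y ^ 2))
          + (β * (y * rexp (-(2 * v)⁻¹ * y ^ 2)) + γ * rexp (-(2 * v)⁻¹ * y ^ 2)) := by
      ext y; ring
    have h10 : Integrable (fun y : ℝ => β * (y * rexp (-(2 * v)⁻¹ * y ^ 2))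
        + γ * rexp (-(2 * v)⁻¹ * y ^ 2)) := (h1.const_mul β).add (h0.const_mul γ)
    rw [e1, integral_add (h2.const_mul α) h10]
    rw [integral_add (h1.const_mul β) (h0.const_mul γ), integral_const_mul, integral_const_mul,
      integral_const_mul, integral_sq_mul_exp_neg_mul_sq hb,
      integral_mul_exp_neg_mul_sq_eq_zero hb, integral_gaussian]
  rw [hexp]
  have hs : Real.sqrt (π / (2 * v)⁻¹) = Real.sqrt (2 * π * v) := by
    congr 1; field_simp
  have hpos : (0:ℝ) < Real.sqrt (2 * π * v) := Real.sqrt_pos.mpr (by positivity)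
  rw [hs]
  field_simp
  ring

lemma klDiv_gaussianReal_aux {v1 v2 : ℝ} (hv1 : 0 < v1) (hv2 : 0 < v2) (m1 m2 : ℝ) :
    klDiv (gaussianReal m1 v1.toNNReal) (gaussianReal m2 v2.toNNReal)
      = ENNReal.ofReal ((1/2) * (Real.log v2 - Real.log v1)
          + (v1 + (m1 - m2) ^ 2) / (2 * v2) - 1/2) := by
  have hc1 : ((v1.toNNReal : ℝ≥0) : ℝ) = v1 := Real.coe_toNNReal _ hv1.le
  have hc2 : ((v2.toNNReal : ℝ≥0) : ℝ) = v2 := Real.coe_toNNReal _ hv2.le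
  have hne1 : v1.toNNReal ≠ 0 := by
    simp only [ne_eq, Real.toNNReal_eq_zero, not_le]; exact hv1
  have hne2 : v2.toNNReal ≠ 0 := by
    simp only [ne_eq, Real.toNNReal_eq_zero, not_le]; exact hv2
  set μ := gaussianReal m1 v1.toNNReal with hμ
  set ν := gaussianReal m2 v2.toNNReal with hν
  have hac : μ ≪ ν :=
    (gaussianReal_absolutelyContinuous m1 hne1).trans
      (gaussianReal_absolutelyContinuous' m2 hne2)
  set α := 1 / (2 * v2) - 1 / (2 * v1) with hα
  set β := (m1 - m2) / v2 with hβ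
  set γ := (1/2) * (Real.log (2 * π * v2) - Real.log (2 * π * v1))
      + (m1 - m2) ^ 2 / (2 * v2) with hγ
  set G : ℝ → ℝ := fun x => α * (x - m1) ^ 2 + β * (x - m1) + γ with hG
  -- rnDeriv
  have hrn : μ.rnDeriv ν =ᵐ[volume]
      fun x => (gaussianPDF m2 v2.toNNReal x)⁻¹ * gaussianPDF m1 v1.toNNReal x := by
    have h1 := Measure.rnDeriv_withDensity_right μ volume
      (measurable_gaussianPDF m2 v2.toNNReal).aemeasurable
      (ae_of_all _ fun x => (gaussianPDF_pos m2 hne2 x).ne')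
      (ae_of_all _ fun x => ENNReal.ofReal_ne_top)
    rw [← gaussianReal_of_var_ne_zero m2 hne2, ← hν] at h1
    filter_upwards [h1, rnDeriv_gaussianReal m1 v1.toNNReal] with x hx hx2
    rw [hx, hx2]
  have hμvol : μ ≪ volume := gaussianReal_absolutelyContinuous m1 hne1
  have h_llr : llr μ ν =ᵐ[μ] G := by
    filter_upwards [hμvol.ae_le hrn] with x hx
    have hp1 : 0 < gaussianPDFReal m1 v1.toNNReal x := gaussianPDFReal_pos _ _ _ hne1
    have hp2 : 0 < gaussianPDFReal m2 v2.toNNReal x := gaussianPDFReal_pos _ _ _ hne2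
    rw [llr, hx]
    rw [gaussianPDF, gaussianPDF, ENNReal.toReal_mul, ENNReal.toReal_inv,
      ENNReal.toReal_ofReal hp2.le, ENNReal.toReal_ofReal hp1.le,
      Real.log_mul (inv_ne_zero hp2.ne') hp1.ne', Real.log_inv]
    rw [gaussianPDFReal, gaussianPDFReal, hc1, hc2]
    have hs1 : (0:ℝ) < 2 * π * v1 := by positivity
    have hs2 : (0:ℝ) < 2 * π * v2 := by positivity
    rw [Real.log_mul (inv_ne_zero (Real.sqrt_pos.mpr hs1).ne') (Real.exp_ne_zero _),
      Real.log_mul (inv_ne_zero (Real.sqrt_pos.mpr hs2).ne') (Real.exp_ne_zero _),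
      Real.log_inv, Real.log_inv, Real.log_exp, Real.log_exp,
      Real.log_sqrt hs1.le, Real.log_sqrt hs2.le]
    simp only [hG, hα, hβ, hγ]
    field_simp
    ring
  have hIntG : Integrable G μ := by
    rw [hμ, gaussianReal_of_var_ne_zero m1 hne1]
    rw [integrable_withDensity_iff (measurable_gaussianPDF _ _)
      (ae_of_all _ fun x => ENNReal.ofReal_lt_top)]
    refine ((gauss_poly_integrable hv1 m1 α β γ).const_mul
      (Real.sqrt (2 * π * v1))⁻¹).congr (Filter.Eventually.of_forall fun x => ?_)
    simp only [gaussianPDF_def]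
    rw [ENNReal.toReal_ofReal (gaussianPDFReal_nonneg _ _ _)]
    rw [gaussianPDFReal, hc1]
    simp only [hG]
    ring
  have hInt : Integrable (llr μ ν) μ := hIntG.congr h_llr.symm
  have hval : ∫ x, llr μ ν x ∂μ = α * v1 + γ := by
    rw [integral_congr_ae h_llr]
    rw [hμ, gaussianReal_of_var_ne_zero m1 hne1]
    have : (volume.withDensity (gaussianPDF m1 v1.toNNReal))
        = volume.withDensity (fun x => ((gaussianPDFReal m1 v1.toNNReal x).toNNReal : ℝ≥0∞)) := rfl
    rw [this, integral_withDensity_eq_integral_smul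
      ((measurable_gaussianPDFReal m1 v1.toNNReal).real_toNNReal)]
    rw [← gauss_poly_integral hv1 m1 α β γ]
    congr 1; ext x
    rw [NNReal.smul_def, smul_eq_mul, Real.coe_toNNReal _ (gaussianPDFReal_nonneg _ _ _)]
    rw [gaussianPDFReal, hc1]
    simp only [hG]
    ring
  rw [klDiv, if_pos ⟨hac, hInt⟩, hval]
  congr 1
  have h2π : Real.log (2 * π * v2) - Real.log (2 * π * v1) = Real.log v2 - Real.log v1 := by
    rw [Real.log_mul (by positivity) hv2.ne', Real.log_mul (by positivity) hv1.ne']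
    ring
  rw [hα, hγ, h2π]
  field_simp
  ring

/-- The core computation of the paper's Proposition 1 (mean readout): the per-graph KL term
`KL(N(μZ, σh² A / m²), N(μh, σh² / m))` equals
`-½ log A + A/(2m) + B²/(2m) + ½ log m - ½`. -/
theorem klDiv_mean_readout
    (m : ℕ) (hm : 1 ≤ m) (μh σh : ℝ) (hσ : 0 < σh)
    (lam : Fin m → ℝ) (hlam : ∀ j, lam j = 0 ∨ lam j = 1) (h : Fin m → ℝ)
    (A B μZ : ℝ)
    (hA : A = ∑ j, (1 - lam j) ^ 2) (hApos : 0 < A)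
    (hB : B = (∑ j, lam j * (h j - μh)) / σh)
    (hμZ : μZ = (1 / (m : ℝ)) * (∑ j, lam j * h j + (∑ j, (1 - lam j)) * μh)) :
    klDiv (gaussianReal μZ (σh ^ 2 * A / (m : ℝ) ^ 2).toNNReal)
        (gaussianReal μh (σh ^ 2 / (m : ℝ)).toNNReal) =
      ENNReal.ofReal (-(1 / 2) * Real.log A + A / (2 * m) + B ^ 2 / (2 * m)
        + (1 / 2) * Real.log m - 1 / 2) := by
  have hm' : (0:ℝ) < (m:ℝ) := by exact_mod_cast Nat.lt_of_lt_of_le Nat.zero_lt_one hm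
  have hv1 : 0 < σh ^ 2 * A / (m : ℝ) ^ 2 := by positivity
  have hv2 : 0 < σh ^ 2 / (m : ℝ) := by positivity
  rw [klDiv_gaussianReal_aux hv1 hv2 μZ μh]
  congr 1
  have hd : μZ - μh = σh * B / m := by
    have hsum : ∑ j, (1 - lam j) = (m:ℝ) - ∑ j, lam j := by
      rw [Finset.sum_sub_distrib, Finset.sum_const, Finset.card_univ, Fintype.card_fin,
        nsmul_eq_mul, mul_one]
    have hsum2 : ∑ j, lam j * (h j - μh) = (∑ j, lam j * h j) - (∑ j, lam j) * μh := by
      rw [Finset.sum_mul, ← Finset.sum_sub_distrib]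
      congr 1; ext j; ring
    rw [hμZ, hB, hsum, hsum2]
    field_simp
    ring
  have hlog : Real.log (σh ^ 2 / (m : ℝ)) - Real.log (σh ^ 2 * A / (m : ℝ) ^ 2)
      = Real.log m - Real.log A := by
    rw [Real.log_div (by positivity) hm'.ne', Real.log_div (by positivity) (by positivity),
      Real.log_mul (by positivity) hApos.ne']
    simp only [Real.log_pow]
    push_cast
    ring
  rw [hd, hlog]
  field_simp
  ring
end

section
/- Let m ≥ 1, μ_h ∈ ℝ, σ_h > 0, and let λ : Fin m → ℝ take values in {0, 1} and h : Fin m → ℝ. Let ε_1, …, ε_m be independent random variables each with law gaussianReal μ_h σ_h², set A = ∑_j (1 − λ_j)² and B = (∑_j λ_j (h_j − μ_h)) / σ_h, and assume A > 0. Then the law of the sum readout Z = ∑_j (λ_j · h_j + (1 − λ_j) · ε_j) is gaussianReal (∑_j λ_j h_j + (∑_j (1 − λ_j)) μ_h) (σ_h² A), and klDiv(law of Z, gaussianReal (m · μ_h) (m · σ_h²)) = −(1/2) log A + A/(2m) + B²/(2m) + (1/2) log m − 1/2. (The sum-readout case of the paper's Proposition 1, which the proposition covers by allowing the readout to be mean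 or sum.) -/
open MeasureTheory ProbabilityTheory Real
open scoped ENNReal NNReal Classical

namespace KLAux

/-- value of the full-line second moment Gaussian integral -/
lemma integral_sq_exp_neg_mul_sq {b : ℝ} (hb : 0 < b) :
    ∫ x : ℝ, x ^ 2 * rexp (-b * x ^ 2) = √π / (2 * b ^ ((3:ℝ)/2)) := by
  have hint : Integrable (fun x : ℝ => x ^ 2 * rexp (-b * x ^ 2)) := by
    have := integrable_rpow_mul_exp_neg_mul_sq hb (by norm_num : (-1:ℝ) < 2)
    have heq : (fun x : ℝ => x ^ (2:ℝ) * rexp (-b * x ^ 2))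
        = fun x : ℝ => x ^ 2 * rexp (-b * x ^ 2) := by
      funext x
      rw [show (2:ℝ) = ((2:ℕ):ℝ) by norm_num, Real.rpow_natCast]
    rwa [heq] at this
  have hsplit := integral_add_compl (measurableSet_Ioi (a := (0:ℝ))) hint
  rw [Set.compl_Ioi] at hsplit
  have hIic : ∫ x in Set.Iic (0:ℝ), x ^ 2 * rexp (-b * x ^ 2)
      = ∫ x in Set.Ioi (0:ℝ), x ^ 2 * rexp (-b * x ^ 2) := by
    rw [show (Set.Iic (0:ℝ)) = Set.Iic (-(0:ℝ)) by norm_num,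
      ← integral_comp_neg_Ioi]
    simp
  have hIoi : ∫ x in Set.Ioi (0:ℝ), x ^ 2 * rexp (-b * x ^ 2)
      = b ^ (-(2+1) / 2 : ℝ) * (1 / 2) * Real.Gamma ((2 + 1) / 2) := by
    rw [← integral_rpow_mul_exp_neg_mul_rpow (by norm_num : (0:ℝ) < 2)
      (by norm_num : (-1:ℝ) < 2) hb]
    refine setIntegral_congr_fun measurableSet_Ioi (fun x hx => ?_)
    have h2 : x ^ (2:ℝ) = x ^ 2 := by
      rw [← Real.rpow_natCast x 2]; norm_num
    rw [h2]
  have hGamma : Real.Gamma ((2 + 1) / 2 : ℝ) = √π / 2 := by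
    rw [show ((2 + 1) / 2 : ℝ) = 1/2 + 1 by norm_num, Real.Gamma_add_one (by norm_num),
      Real.Gamma_one_half_eq]
    ring
  rw [← hsplit, hIic, hIoi, hGamma]
  rw [show (-(2+1)/2 : ℝ) = -((3:ℝ)/2) by norm_num, Real.rpow_neg hb.le]
  have : (0:ℝ) < b ^ ((3:ℝ)/2) := Real.rpow_pos_of_pos hb _
  field_simp
  ring

lemma integral_self_mul_exp_neg_mul_sq (b : ℝ) :
    ∫ x : ℝ, x * rexp (-b * x ^ 2) = 0 := by
  have h1 := integral_neg_eq_self (fun x : ℝ => x * rexp (-b * x ^ 2)) volume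
  simp only [neg_sq, neg_mul] at h1 ⊢
  rw [integral_neg] at h1
  linarith


lemma integral_poly_mul_exp {b : ℝ} (hb : 0 < b) (α β γ : ℝ) :
    ∫ u : ℝ, (α + β*u + γ*u^2) * rexp (-b*u^2)
      = α * √(π/b) + γ * (√π / (2 * b ^ ((3:ℝ)/2))) := by
  have h0 : Integrable (fun u : ℝ => rexp (-b*u^2)) := integrable_exp_neg_mul_sq hb
  have h1 : Integrable (fun u : ℝ => u * rexp (-b*u^2)) := integrable_mul_exp_neg_mul_sq hb
  have h2 : Integrable (fun u : ℝ => u^2 * rexp (-b*u^2)) := by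
    have := integrable_rpow_mul_exp_neg_mul_sq hb (by norm_num : (-1:ℝ) < 2)
    have heq : (fun x : ℝ => x ^ (2:ℝ) * rexp (-b * x ^ 2))
        = fun x : ℝ => x ^ 2 * rexp (-b * x ^ 2) := by
      funext x
      rw [show (2:ℝ) = ((2:ℕ):ℝ) by norm_num, Real.rpow_natCast]
    rwa [heq] at this
  have heq : (fun u : ℝ => (α + β*u + γ*u^2) * rexp (-b*u^2))
      = fun u : ℝ => α * rexp (-b*u^2) + β * (u * rexp (-b*u^2)) + γ * (u^2 * rexp (-b*u^2)) := by
    funext u; ring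
  have hA : Integrable (fun u : ℝ => α * rexp (-b*u^2) + β * (u * rexp (-b*u^2))) := by
    exact (h0.const_mul α).add (h1.const_mul β)
  rw [heq, integral_add hA (h2.const_mul γ),
    integral_add (h0.const_mul α) (h1.const_mul β), integral_const_mul,
    integral_const_mul, integral_const_mul, integral_gaussian,
    integral_self_mul_exp_neg_mul_sq, integral_sq_exp_neg_mul_sq hb]
  ring

lemma integrable_poly_mul_exp {b : ℝ} (hb : 0 < b) (α β γ : ℝ) :
    Integrable (fun u : ℝ => (α + β*u + γ*u^2) * rexp (-b*u^2)) := by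
  have h0 : Integrable (fun u : ℝ => rexp (-b*u^2)) := integrable_exp_neg_mul_sq hb
  have h1 : Integrable (fun u : ℝ => u * rexp (-b*u^2)) := integrable_mul_exp_neg_mul_sq hb
  have h2 : Integrable (fun u : ℝ => u^2 * rexp (-b*u^2)) := by
    have := integrable_rpow_mul_exp_neg_mul_sq hb (by norm_num : (-1:ℝ) < 2)
    have heq : (fun x : ℝ => x ^ (2:ℝ) * rexp (-b * x ^ 2))
        = fun x : ℝ => x ^ 2 * rexp (-b * x ^ 2) := by
      funext x
      rw [show (2:ℝ) = ((2:ℕ):ℝ) by norm_num, Real.rpow_natCast]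
    rwa [heq] at this
  have heq : (fun u : ℝ => (α + β*u + γ*u^2) * rexp (-b*u^2))
      = fun u : ℝ => α * rexp (-b*u^2) + β * (u * rexp (-b*u^2)) + γ * (u^2 * rexp (-b*u^2)) := by
    funext u; ring
  rw [heq]
  exact ((h0.const_mul α).add (h1.const_mul β)).add (h2.const_mul γ)

lemma integral_gaussianReal_eq (μ : ℝ) {v : ℝ≥0} (hv : v ≠ 0) (f : ℝ → ℝ) :
    ∫ x, f x ∂(gaussianReal μ v) = ∫ x, f x * gaussianPDFReal μ v x := by
  rw [gaussianReal_of_var_ne_zero _ hv]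
  have hd : gaussianPDF μ v = fun x => ((Real.toNNReal (gaussianPDFReal μ v x) : ℝ≥0) : ℝ≥0∞) :=
    rfl
  rw [hd, integral_withDensity_eq_integral_smul
    ((measurable_gaussianPDFReal μ v).real_toNNReal) f]
  congr 1
  funext x
  rw [NNReal.smul_def, smul_eq_mul, Real.coe_toNNReal _ (gaussianPDFReal_nonneg μ v x), mul_comm]

lemma integrable_gaussianReal_iff (μ : ℝ) {v : ℝ≥0} (hv : v ≠ 0) (f : ℝ → ℝ) :
    Integrable f (gaussianReal μ v) ↔ Integrable (fun x => f x * gaussianPDFReal μ v x) volume := by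
  rw [gaussianReal_of_var_ne_zero _ hv,
    integrable_withDensity_iff (measurable_gaussianPDF μ v)
      (ae_of_all _ fun x => ENNReal.ofReal_lt_top)]
  simp_rw [gaussianPDF, ENNReal.toReal_ofReal (gaussianPDFReal_nonneg μ v _)]

lemma coe_pos_of_ne_zero {v : ℝ≥0} (hv : v ≠ 0) : (0:ℝ) < v := by
  exact_mod_cast lt_of_le_of_ne (zero_le : (0:ℝ≥0) ≤ v) (Ne.symm hv)

lemma quad_pdf_eq (μ : ℝ) {v : ℝ≥0} (hv : v ≠ 0) (α β γ : ℝ) :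
    (fun x => (α + β*(x-μ) + γ*(x-μ)^2) * gaussianPDFReal μ v x)
      = fun x => (fun u => (α * (√(2 * π * v))⁻¹ + β * (√(2 * π * v))⁻¹ * u
          + γ * (√(2 * π * v))⁻¹ * u^2) * rexp (-(2*(v:ℝ))⁻¹ * u^2)) (x - μ) := by
  funext x
  simp only [gaussianPDFReal]
  have hexp : rexp (-(x - μ)^2 / (2 * (v:ℝ))) = rexp (-(2*(v:ℝ))⁻¹ * (x-μ)^2) := by
    congr 1
    have hv' := coe_pos_of_ne_zero hv
    field_simp
  rw [hexp]
  ring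

lemma integrable_quadratic_gaussianReal (μ : ℝ) {v : ℝ≥0} (hv : v ≠ 0) (α β γ : ℝ) :
    Integrable (fun x => α + β*(x-μ) + γ*(x-μ)^2) (gaussianReal μ v) := by
  rw [integrable_gaussianReal_iff μ hv]
  have hv' := coe_pos_of_ne_zero hv
  have hb : (0:ℝ) < (2*(v:ℝ))⁻¹ := by positivity
  have hI := (integrable_poly_mul_exp hb (α * (√(2 * π * v))⁻¹) (β * (√(2 * π * v))⁻¹)
    (γ * (√(2 * π * v))⁻¹)).comp_sub_right μ
  exact (quad_pdf_eq μ hv α β γ) ▸ hI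

lemma integral_quadratic_gaussianReal (μ : ℝ) {v : ℝ≥0} (hv : v ≠ 0) (α β γ : ℝ) :
    ∫ x, (α + β*(x-μ) + γ*(x-μ)^2) ∂(gaussianReal μ v) = α + γ * v := by
  have hv' := coe_pos_of_ne_zero hv
  have h2v : (0:ℝ) < 2 * v := by positivity
  have hb : (0:ℝ) < (2*(v:ℝ))⁻¹ := by positivity
  set c : ℝ := (√(2 * π * v))⁻¹ with hc
  rw [integral_gaussianReal_eq μ hv, quad_pdf_eq μ hv α β γ,
    integral_sub_right_eq_self (fun u => (α * (√(2 * π * (v:ℝ)))⁻¹ + β * (√(2 * π * (v:ℝ)))⁻¹ * u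
          + γ * (√(2 * π * (v:ℝ)))⁻¹ * u^2) * rexp (-(2*(v:ℝ))⁻¹ * u^2)) μ,
    integral_poly_mul_exp hb]
  have hsqrt : √(2 * π * (v:ℝ)) = √(2*(v:ℝ)) * √π := by
    rw [show 2*π*(v:ℝ) = (2*(v:ℝ))*π by ring, Real.sqrt_mul h2v.le]
  have h1 : c * √(π/(2*(v:ℝ))⁻¹) = 1 := by
    rw [show π/(2*(v:ℝ))⁻¹ = 2*π*(v:ℝ) by field_simp, hc]
    exact inv_mul_cancel₀ (ne_of_gt (Real.sqrt_pos.mpr (by positivity)))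
  have hpow : ((2*(v:ℝ))⁻¹) ^ ((3:ℝ)/2) = ((2*(v:ℝ)) * √(2*(v:ℝ)))⁻¹ := by
    rw [Real.inv_rpow h2v.le]
    congr 1
    rw [show (3:ℝ)/2 = 1 + 1/2 by norm_num, Real.rpow_add h2v, Real.rpow_one,
      ← Real.sqrt_eq_rpow]
  have h2 : c * (√π/(2*((2*(v:ℝ))⁻¹) ^ ((3:ℝ)/2))) = v := by
    rw [hpow, hc, hsqrt]
    have hs : √(2*(v:ℝ)) * √(2*(v:ℝ)) = 2*(v:ℝ) := Real.mul_self_sqrt h2v.le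
    have hsp : (0:ℝ) < √(2*(v:ℝ)) := Real.sqrt_pos.mpr h2v
    have hspi : (0:ℝ) < √π := Real.sqrt_pos.mpr pi_pos
    field_simp
  calc α * c * √(π/(2*(v:ℝ))⁻¹) + γ * c * (√π/(2*((2*(v:ℝ))⁻¹) ^ ((3:ℝ)/2)))
      = α * (c * √(π/(2*(v:ℝ))⁻¹)) + γ * (c * (√π/(2*((2*(v:ℝ))⁻¹) ^ ((3:ℝ)/2)))) := by ring
    _ = α + γ * v := by rw [h1, h2]; ring



lemma gaussianReal_eq_withDensity (μ1 μ2 : ℝ) {v1 v2 : ℝ≥0} (h1 : v1 ≠ 0) (h2 : v2 ≠ 0) :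
    gaussianReal μ1 v1 = (gaussianReal μ2 v2).withDensity
      (fun x => ENNReal.ofReal (gaussianPDFReal μ1 v1 x / gaussianPDFReal μ2 v2 x)) := by
  rw [gaussianReal_of_var_ne_zero _ h1, gaussianReal_of_var_ne_zero _ h2,
    ← withDensity_mul _ (g := fun x => ENNReal.ofReal (gaussianPDFReal μ1 v1 x / gaussianPDFReal μ2 v2 x)) (measurable_gaussianPDF _ _)
      (((measurable_gaussianPDFReal μ1 v1).div (measurable_gaussianPDFReal μ2 v2)).ennreal_ofReal :
        Measurable fun x => ENNReal.ofReal (gaussianPDFReal μ1 v1 x / gaussianPDFReal μ2 v2 x))]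
  congr 1
  funext x
  simp only [Pi.mul_apply, gaussianPDF]
  rw [← ENNReal.ofReal_mul (gaussianPDFReal_nonneg _ _ _)]
  congr 1
  rw [mul_div_cancel₀ _ (ne_of_gt (gaussianPDFReal_pos μ2 v2 x h2))]

lemma klDiv_gaussianReal (μ1 μ2 : ℝ) {v1 v2 : ℝ≥0} (h1 : v1 ≠ 0) (h2 : v2 ≠ 0) :
    klDiv (gaussianReal μ1 v1) (gaussianReal μ2 v2)
      = ENNReal.ofReal (Real.log ((v2:ℝ)/(v1:ℝ)) / 2
          + ((v1:ℝ) + (μ1-μ2)^2)/(2*(v2:ℝ)) - 1/2) := by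
  have hv1 := coe_pos_of_ne_zero h1
  have hv2 := coe_pos_of_ne_zero h2
  set μ : Measure ℝ := gaussianReal μ1 v1
  set ν : Measure ℝ := gaussianReal μ2 v2
  set ρ : ℝ → ℝ≥0∞ := fun x => ENNReal.ofReal (gaussianPDFReal μ1 v1 x / gaussianPDFReal μ2 v2 x)
    with hρ
  have hρm : Measurable ρ :=
    ((measurable_gaussianPDFReal _ _).div (measurable_gaussianPDFReal _ _)).ennreal_ofReal
  have hwd : μ = ν.withDensity ρ := gaussianReal_eq_withDensity μ1 μ2 h1 h2
  have hac : μ ≪ ν := hwd ▸ withDensity_absolutelyContinuous ν ρ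
  have hrn : μ.rnDeriv ν =ᵐ[ν] ρ := by
    rw [hwd]
    exact Measure.rnDeriv_withDensity ν hρm
  -- the log-likelihood ratio equals an explicit quadratic μ-a.e.
  set c0 : ℝ := (μ1-μ2)^2/(2*(v2:ℝ)) + Real.log (√(2*π*(v2:ℝ))) - Real.log (√(2*π*(v1:ℝ)))
    with hc0
  set c1 : ℝ := (μ1-μ2)/(v2:ℝ) with hc1
  set c2 : ℝ := 1/(2*(v2:ℝ)) - 1/(2*(v1:ℝ)) with hc2
  set g : ℝ → ℝ := fun x => c0 + c1*(x-μ1) + c2*(x-μ1)^2 with hg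
  have hllr : llr μ ν =ᵐ[μ] g := by
    refine (hac.ae_eq hrn).mono fun x hx => ?_
    have hp1 := gaussianPDFReal_pos μ1 v1 x h1
    have hp2 := gaussianPDFReal_pos μ2 v2 x h2
    have hlog : llr μ ν x = Real.log (gaussianPDFReal μ1 v1 x)
        - Real.log (gaussianPDFReal μ2 v2 x) := by
      rw [llr_def]
      simp only [hx, hρ]
      rw [ENNReal.toReal_ofReal (by positivity), Real.log_div (ne_of_gt hp1) (ne_of_gt hp2)]
    rw [hlog]
    have hexpand : ∀ (a : ℝ) (w : ℝ≥0), w ≠ 0 → Real.log (gaussianPDFReal a w x)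
        = - Real.log (√(2*π*(w:ℝ))) + (-(x-a)^2/(2*(w:ℝ))) := by
      intro a w hw
      have hwpos := coe_pos_of_ne_zero hw
      rw [gaussianPDFReal, Real.log_mul (by positivity) (Real.exp_ne_zero _), Real.log_inv,
        Real.log_exp]
    rw [hexpand μ1 v1 h1, hexpand μ2 v2 h2]
    simp only [hg, hc0, hc1, hc2]
    field_simp
    ring
  have hint : Integrable g μ := integrable_quadratic_gaussianReal μ1 h1 c0 c1 c2
  have hillr : Integrable (llr μ ν) μ := hint.congr hllr.symm
  have hval : ∫ x, llr μ ν x ∂μ = c0 + c2 * (v1:ℝ) := by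
    rw [integral_congr_ae hllr]
    exact integral_quadratic_gaussianReal μ1 h1 c0 c1 c2
  rw [klDiv, if_pos ⟨hac, hillr⟩, hval]
  congr 1
  have hlogdiff : Real.log (√(2*π*(v2:ℝ))) - Real.log (√(2*π*(v1:ℝ)))
      = Real.log ((v2:ℝ)/(v1:ℝ)) / 2 := by
    rw [Real.log_sqrt (by positivity), Real.log_sqrt (by positivity)]
    have hld : Real.log (2*π*(v2:ℝ)) - Real.log (2*π*(v1:ℝ)) = Real.log ((v2:ℝ)/(v1:ℝ)) := by
      rw [← Real.log_div (by positivity) (by positivity),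
        show 2*π*(v2:ℝ)/(2*π*(v1:ℝ)) = (v2:ℝ)/(v1:ℝ) by rw [mul_comm 2 π]; rw [mul_div_mul_left _ _ (by positivity)]]
    linarith
  rw [hc0, hc2]
  rw [show (μ1-μ2)^2/(2*(v2:ℝ)) + Real.log (√(2*π*(v2:ℝ))) - Real.log (√(2*π*(v1:ℝ)))
      = (μ1-μ2)^2/(2*(v2:ℝ)) + (Real.log (√(2*π*(v2:ℝ))) - Real.log (√(2*π*(v1:ℝ)))) by ring,
    hlogdiff]
  field_simp
  ring


lemma gaussianPDFReal_mul_eq (μ1 μ2 : ℝ) {v1 v2 : ℝ≥0} (h1 : v1 ≠ 0) (h2 : v2 ≠ 0) (z y : ℝ) :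
    gaussianPDFReal μ1 v1 (z - y) * gaussianPDFReal μ2 v2 y
      = gaussianPDFReal (μ1 + μ2) (v1 + v2) z
        * gaussianPDFReal (μ2 + (v2:ℝ)*(z-μ1-μ2)/((v1:ℝ)+(v2:ℝ)))
            (NNReal.mk ((v1:ℝ)*(v2:ℝ)/((v1:ℝ)+(v2:ℝ))) (by positivity)) y := by
  have hv1 := coe_pos_of_ne_zero h1
  have hv2 := coe_pos_of_ne_zero h2
  have key : ∀ (n1 e1 n2 e2 : ℝ), (n1 * rexp e1) * (n2 * rexp e2) = (n1*n2) * rexp (e1+e2) := by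
    intro n1 e1 n2 e2; rw [Real.exp_add]; ring
  simp only [gaussianPDFReal, NNReal.coe_add, NNReal.coe_mk]
  rw [key, key]
  congr 1
  · rw [← mul_inv, ← mul_inv]
    congr 1
    rw [← Real.sqrt_mul (by positivity), ← Real.sqrt_mul (by positivity)]
    congr 1
    field_simp
  · congr 1
    field_simp
    ring

lemma integral_gaussianPDFReal_conv (μ1 μ2 : ℝ) {v1 v2 : ℝ≥0} (h1 : v1 ≠ 0) (h2 : v2 ≠ 0)
    (z : ℝ) :
    ∫ y, gaussianPDFReal μ1 v1 (z - y) * gaussianPDFReal μ2 v2 y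
      = gaussianPDFReal (μ1+μ2) (v1+v2) z := by
  have hv1 := coe_pos_of_ne_zero h1
  have hv2 := coe_pos_of_ne_zero h2
  have hw : (NNReal.mk ((v1:ℝ)*(v2:ℝ)/((v1:ℝ)+(v2:ℝ))) (by positivity) : ℝ≥0) ≠ 0 := by
    intro hcon
    rw [← NNReal.coe_eq_zero] at hcon
    simp only [NNReal.coe_mk] at hcon
    have : (0:ℝ) < (v1:ℝ)*(v2:ℝ)/((v1:ℝ)+(v2:ℝ)) := by positivity
    linarith
  simp_rw [gaussianPDFReal_mul_eq μ1 μ2 h1 h2 z]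
  rw [integral_const_mul, integral_gaussianPDFReal_eq_one _ hw, mul_one]

lemma integrable_gaussianPDFReal_conv (μ1 μ2 : ℝ) {v1 v2 : ℝ≥0} (h1 : v1 ≠ 0) (h2 : v2 ≠ 0)
    (z : ℝ) :
    Integrable (fun y => gaussianPDFReal μ1 v1 (z - y) * gaussianPDFReal μ2 v2 y) := by
  have heq : (fun y => gaussianPDFReal μ1 v1 (z - y) * gaussianPDFReal μ2 v2 y)
      = fun y => gaussianPDFReal (μ1 + μ2) (v1 + v2) z
        * gaussianPDFReal (μ2 + (v2:ℝ)*(z-μ1-μ2)/((v1:ℝ)+(v2:ℝ)))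
            (NNReal.mk ((v1:ℝ)*(v2:ℝ)/((v1:ℝ)+(v2:ℝ))) (by positivity)) y := by
    funext y; exact gaussianPDFReal_mul_eq μ1 μ2 h1 h2 z y
  rw [heq]
  exact (integrable_gaussianPDFReal _ _).const_mul _

lemma lintegral_gaussianPDF_conv (μ1 μ2 : ℝ) {v1 v2 : ℝ≥0} (h1 : v1 ≠ 0) (h2 : v2 ≠ 0)
    (z : ℝ) :
    ∫⁻ y, gaussianPDF μ1 v1 (z - y) * gaussianPDF μ2 v2 y
      = gaussianPDF (μ1+μ2) (v1+v2) z := by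
  simp_rw [gaussianPDF, ← ENNReal.ofReal_mul (gaussianPDFReal_nonneg _ _ _)]
  rw [← ofReal_integral_eq_lintegral_ofReal (integrable_gaussianPDFReal_conv μ1 μ2 h1 h2 z)
    (ae_of_all _ fun y => mul_nonneg (gaussianPDFReal_nonneg _ _ _)
      (gaussianPDFReal_nonneg _ _ _)),
    integral_gaussianPDFReal_conv μ1 μ2 h1 h2 z]


lemma gaussianReal_prod_add (μ1 μ2 : ℝ) (v1 v2 : ℝ≥0) :
    Measure.map (fun p : ℝ × ℝ => p.1 + p.2) ((gaussianReal μ1 v1).prod (gaussianReal μ2 v2))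
      = gaussianReal (μ1 + μ2) (v1 + v2) := by
  by_cases h1 : v1 = 0
  · subst h1
    rw [gaussianReal_zero_var, Measure.dirac_prod, zero_add,
      Measure.map_map measurable_add (measurable_prodMk_left)]
    have : ((fun p : ℝ × ℝ => p.1 + p.2) ∘ fun y => (μ1, y)) = fun y => μ1 + y := rfl
    rw [this, gaussianReal_map_const_add, add_comm μ2 μ1]
  by_cases h2 : v2 = 0
  · subst h2
    rw [gaussianReal_zero_var, Measure.prod_dirac, add_zero,
      Measure.map_map measurable_add (measurable_prodMk_right)]
    have : ((fun p : ℝ × ℝ => p.1 + p.2) ∘ fun x => (x, μ2)) = fun x => x + μ2 := rfl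
    rw [this, gaussianReal_map_add_const]
  -- main case
  set f := gaussianPDF μ1 v1
  set g := gaussianPDF μ2 v2
  have hfm : Measurable f := measurable_gaussianPDF _ _
  have hgm : Measurable g := measurable_gaussianPDF _ _
  have h12 : v1 + v2 ≠ 0 := by simp [h1, h2]
  refine Measure.ext fun s hs => ?_
  rw [Measure.map_apply measurable_add hs, gaussianReal_of_var_ne_zero _ h1,
    gaussianReal_of_var_ne_zero _ h2, gaussianReal_of_var_ne_zero _ h12,
    Measure.prod_apply (measurable_add hs), withDensity_apply _ hs]
  have hind : Measurable (Set.indicator s (fun _ => (1:ℝ≥0∞))) :=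
    measurable_one.indicator hs
  have step1 : ∀ x : ℝ, (volume.withDensity g) (Prod.mk x ⁻¹' ((fun p : ℝ × ℝ => p.1 + p.2) ⁻¹' s))
      = ∫⁻ y, Set.indicator s (fun _ => (1:ℝ≥0∞)) (x + y) * g y := by
    intro x
    have hpre : (Prod.mk x ⁻¹' ((fun p : ℝ × ℝ => p.1 + p.2) ⁻¹' s)) = (fun y => x + y) ⁻¹' s :=
      rfl
    rw [hpre, withDensity_apply _ ((measurable_const_add x) hs),
      ← lintegral_indicator ((measurable_const_add x) hs)]
    apply lintegral_congr fun y => ?_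
    by_cases hy : x + y ∈ s <;>
      simp [Set.indicator, hy, Set.mem_preimage]
  simp_rw [show gaussianPDF μ1 v1 = f from rfl, show gaussianPDF μ2 v2 = g from rfl, step1]
  have hF : Measurable fun x => ∫⁻ y, Set.indicator s (fun _ => (1:ℝ≥0∞)) (x + y) * g y :=
    Measurable.lintegral_prod_right ((hind.comp measurable_add).mul (hgm.comp measurable_snd))
  rw [lintegral_withDensity_eq_lintegral_mul _ hfm hF]
  simp only [Pi.mul_apply]
  have hfx_ne_top : ∀ x, f x ≠ ⊤ := fun x => ENNReal.ofReal_ne_top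
  have e1 : ∫⁻ x, f x * ∫⁻ y, Set.indicator s (fun _ => (1:ℝ≥0∞)) (x + y) * g y
      = ∫⁻ x, ∫⁻ y, f x * (Set.indicator s (fun _ => (1:ℝ≥0∞)) (x + y) * g y) :=
    lintegral_congr fun x => (lintegral_const_mul' (f x) _ (hfx_ne_top x)).symm
  have e2 : ∫⁻ x, ∫⁻ y, f x * (Set.indicator s (fun _ => (1:ℝ≥0∞)) (x + y) * g y)
      = ∫⁻ y, ∫⁻ x, f x * (Set.indicator s (fun _ => (1:ℝ≥0∞)) (x + y) * g y) :=
    lintegral_lintegral_swap (((hfm.comp measurable_fst).mul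
      ((hind.comp measurable_add).mul (hgm.comp measurable_snd))).aemeasurable)
  have e3 : ∀ y : ℝ, ∫⁻ x, f x * (Set.indicator s (fun _ => (1:ℝ≥0∞)) (x + y) * g y)
      = ∫⁻ z, Set.indicator s (fun _ => (1:ℝ≥0∞)) z * (f (z - y) * g y) := by
    intro y
    have htr := lintegral_add_right_eq_self (μ := volume)
      (fun z => Set.indicator s (fun _ => (1:ℝ≥0∞)) z * (f (z - y) * g y)) y
    rw [← htr]
    apply lintegral_congr fun x => ?_
    rw [add_sub_cancel_right]
    ring
  have e4 : ∫⁻ y, ∫⁻ z, Set.indicator s (fun _ => (1:ℝ≥0∞)) z * (f (z - y) * g y)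
      = ∫⁻ z, ∫⁻ y, Set.indicator s (fun _ => (1:ℝ≥0∞)) z * (f (z - y) * g y) :=
    lintegral_lintegral_swap (((hind.comp measurable_snd).mul
      (((hfm.comp (measurable_snd.sub measurable_fst))).mul
        (hgm.comp measurable_fst))).aemeasurable)
  have hind_ne_top : ∀ z : ℝ, Set.indicator s (fun _ => (1:ℝ≥0∞)) z ≠ ⊤ := by
    intro z
    by_cases hz : z ∈ s <;> simp [hz]
  have e5 : ∀ z : ℝ, ∫⁻ y, Set.indicator s (fun _ => (1:ℝ≥0∞)) z * (f (z - y) * g y)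
      = Set.indicator s (fun _ => (1:ℝ≥0∞)) z * gaussianPDF (μ1+μ2) (v1+v2) z := by
    intro z
    rw [lintegral_const_mul' _ _ (hind_ne_top z)]
    congr 1
    exact lintegral_gaussianPDF_conv μ1 μ2 h1 h2 z
  calc ∫⁻ x, f x * ∫⁻ y, Set.indicator s (fun _ => (1:ℝ≥0∞)) (x + y) * g y
      = ∫⁻ y, ∫⁻ x, f x * (Set.indicator s (fun _ => (1:ℝ≥0∞)) (x + y) * g y) := by
        rw [e1, e2]
    _ = ∫⁻ z, ∫⁻ y, Set.indicator s (fun _ => (1:ℝ≥0∞)) z * (f (z - y) * g y) := by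
        rw [← e4]; exact lintegral_congr e3
    _ = ∫⁻ z, Set.indicator s (fun _ => (1:ℝ≥0∞)) z * gaussianPDF (μ1+μ2) (v1+v2) z :=
        lintegral_congr e5
    _ = ∫⁻ z in s, gaussianPDF (μ1+μ2) (v1+v2) z := by
        rw [← lintegral_indicator hs]
        apply lintegral_congr fun z => ?_
        by_cases hz : z ∈ s <;> simp [hz]


lemma gaussianReal_add_of_indepFun {Ω : Type*} [MeasurableSpace Ω] (P : Measure Ω)
    [IsProbabilityMeasure P] {X Y : Ω → ℝ} (hX : Measurable X) (hY : Measurable Y)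
    (μ1 μ2 : ℝ) (v1 v2 : ℝ≥0) (hXl : Measure.map X P = gaussianReal μ1 v1)
    (hYl : Measure.map Y P = gaussianReal μ2 v2) (hind : IndepFun X Y P) :
    Measure.map (fun ω => X ω + Y ω) P = gaussianReal (μ1 + μ2) (v1 + v2) := by
  have hprod : Measure.map (fun ω => (X ω, Y ω)) P
      = (gaussianReal μ1 v1).prod (gaussianReal μ2 v2) := by
    rw [← hXl, ← hYl]
    exact (indepFun_iff_map_prod_eq_prod_map_map hX.aemeasurable hY.aemeasurable).mp hind
  have hcomp : (fun ω => X ω + Y ω)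
      = (fun p : ℝ × ℝ => p.1 + p.2) ∘ (fun ω => (X ω, Y ω)) := rfl
  rw [hcomp, ← Measure.map_map measurable_add (hX.prodMk hY), hprod,
    gaussianReal_prod_add]

lemma gaussianReal_sum {Ω : Type*} [MeasurableSpace Ω] (P : Measure Ω)
    [IsProbabilityMeasure P] {n : ℕ} (Y : Fin n → Ω → ℝ) (hY : ∀ j, Measurable (Y j))
    (hind : iIndepFun Y P) (μs : Fin n → ℝ) (vs : Fin n → ℝ≥0)
    (hlaws : ∀ j, Measure.map (Y j) P = gaussianReal (μs j) (vs j)) (s : Finset (Fin n)) :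
    Measure.map (fun ω => ∑ j ∈ s, Y j ω) P
      = gaussianReal (∑ j ∈ s, μs j) (∑ j ∈ s, vs j) := by
  classical
  induction s using Finset.induction_on with
  | empty =>
      simp only [Finset.sum_empty]
      rw [gaussianReal_zero_var]
      simp [Measure.map_const]
  | @insert i s hnot ih =>
      have hsum_meas : Measurable (fun ω => ∑ j ∈ s, Y j ω) :=
        Finset.measurable_sum s fun j _ => hY j
      have hfun_eq : (fun ω => ∑ j ∈ s, Y j ω) = ∑ j ∈ s, Y j := by
        funext ω; simp [Finset.sum_apply]
      have hindep2 : IndepFun (Y i) (fun ω => ∑ j ∈ s, Y j ω) P := by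
        have h := (hind.indepFun_finsetSum_of_notMem hY hnot).symm
        rwa [← hfun_eq] at h
      have hadd := gaussianReal_add_of_indepFun P (hY i) hsum_meas (μs i) (∑ j ∈ s, μs j)
        (vs i) (∑ j ∈ s, vs j) (hlaws i) ih hindep2
      simp only [Finset.sum_insert hnot]
      exact hadd

lemma map_gaussian_const_mul {Ω : Type*} [MeasurableSpace Ω] (P : Measure Ω) {X : Ω → ℝ}
    (hX : Measurable X) {μ : ℝ} {v : ℝ≥0} (hXl : Measure.map X P = gaussianReal μ v) (c : ℝ) :
    Measure.map (fun ω => c * X ω) P = gaussianReal (c * μ) (NNReal.mk (c^2) (sq_nonneg _) * v) := by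
  have hcomp : (fun ω => c * X ω) = (fun x => c * x) ∘ X := rfl
  rw [hcomp, ← Measure.map_map (measurable_const_mul c) hX, hXl, gaussianReal_map_const_mul]

lemma map_gaussian_const_add {Ω : Type*} [MeasurableSpace Ω] (P : Measure Ω) {X : Ω → ℝ}
    (hX : Measurable X) {μ : ℝ} {v : ℝ≥0} (hXl : Measure.map X P = gaussianReal μ v) (y : ℝ) :
    Measure.map (fun ω => y + X ω) P = gaussianReal (μ + y) v := by
  have hcomp : (fun ω => y + X ω) = (fun x => y + x) ∘ X := rfl
  rw [hcomp, ← Measure.map_map (measurable_const_add y) hX, hXl, gaussianReal_map_const_add]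

end KLAux

open KLAux

/-- The sum-readout case of the paper's Proposition 1: the law of the sum readout
`Z = ∑ j, (lam j * h j + (1 - lam j) * ε j)` is
`N(∑ j lam j h j + (∑ j (1 - lam j)) μh, σh² A)`, and its KL divergence to the prior
`N(m μh, m σh²)` equals `-½ log A + A/(2m) + B²/(2m) + ½ log m - ½`. -/
theorem law_and_klDiv_sum_readout
    {Ω : Type*} [MeasurableSpace Ω] (P : Measure Ω) [IsProbabilityMeasure P]
    (m : ℕ) (hm : 1 ≤ m) (μh σh : ℝ) (hσ : 0 < σh)
    (lam : Fin m → ℝ) (hlam : ∀ j, lam j = 0 ∨ lam j = 1) (h : Fin m → ℝ)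
    (ε : Fin m → Ω → ℝ) (hε : ∀ j, Measurable (ε j))
    (hlaw : ∀ j, Measure.map (ε j) P = gaussianReal μh (σh ^ 2).toNNReal)
    (hindep : iIndepFun ε P)
    (A B : ℝ)
    (hA : A = ∑ j, (1 - lam j) ^ 2) (hApos : 0 < A)
    (hB : B = (∑ j, lam j * (h j - μh)) / σh) :
    Measure.map (fun ω => ∑ j, (lam j * h j + (1 - lam j) * ε j ω)) P =
        gaussianReal (∑ j, lam j * h j + (∑ j, (1 - lam j)) * μh) (σh ^ 2 * A).toNNReal ∧
      klDiv (Measure.map (fun ω => ∑ j, (lam j * h j + (1 - lam j) * ε j ω)) P)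
          (gaussianReal ((m : ℝ) * μh) ((m : ℝ) * σh ^ 2).toNNReal) =
        ENNReal.ofReal (-(1 / 2) * Real.log A + A / (2 * m) + B ^ 2 / (2 * m)
          + (1 / 2) * Real.log m - 1 / 2) := by
  have hσ2 : (0:ℝ) < σh ^ 2 := by positivity
  set v : ℝ≥0 := (σh ^ 2).toNNReal with hv
  set Y : Fin m → Ω → ℝ := fun j ω => (1 - lam j) * ε j ω with hY
  have hYmeas : ∀ j, Measurable (Y j) := fun j => (hε j).const_mul _
  have hYlaw : ∀ j, Measure.map (Y j) P
      = gaussianReal ((1 - lam j) * μh) (NNReal.mk ((1 - lam j)^2) (sq_nonneg _) * v) := fun j =>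
    map_gaussian_const_mul P (hε j) (hlaw j) (1 - lam j)
  have hYindep : iIndepFun Y P :=
    hindep.comp (fun j x => (1 - lam j) * x) (fun j => measurable_const_mul _)
  have hsum := gaussianReal_sum P Y hYmeas hYindep (fun j => (1 - lam j) * μh)
    (fun j => NNReal.mk ((1 - lam j)^2) (sq_nonneg _) * v) hYlaw Finset.univ
  set C : ℝ := ∑ j, lam j * h j with hC
  have hZ : (fun ω => ∑ j, (lam j * h j + (1 - lam j) * ε j ω))
      = fun ω => C + ∑ j, Y j ω := by
    funext ω
    rw [Finset.sum_add_distrib]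
  have hvar : (∑ j, (NNReal.mk ((1 - lam j)^2) (sq_nonneg _) * v : ℝ≥0)) = (σh ^ 2 * A).toNNReal := by
    apply NNReal.coe_injective
    rw [NNReal.coe_sum, Real.coe_toNNReal _ (by positivity : (0:ℝ) ≤ σh ^ 2 * A)]
    have hco : ∀ j : Fin m, ((NNReal.mk ((1 - lam j)^2) (sq_nonneg _) * v : ℝ≥0) : ℝ)
        = (1 - lam j)^2 * σh^2 := by
      intro j
      rw [NNReal.coe_mul, NNReal.coe_mk, hv, Real.coe_toNNReal _ hσ2.le]
    rw [Finset.sum_congr rfl (fun j _ => hco j), hA, Finset.mul_sum]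
    apply Finset.sum_congr rfl
    intro j _
    ring
  have hmean : (∑ j, (1 - lam j) * μh) + C = C + (∑ j, (1 - lam j)) * μh := by
    rw [← Finset.sum_mul]
    ring
  have hlawZ : Measure.map (fun ω => ∑ j, (lam j * h j + (1 - lam j) * ε j ω)) P =
      gaussianReal (∑ j, lam j * h j + (∑ j, (1 - lam j)) * μh) (σh ^ 2 * A).toNNReal := by
    rw [hZ]
    have hsum_meas : Measurable (fun ω => ∑ j, Y j ω) :=
      Finset.measurable_sum Finset.univ fun j _ => hYmeas j
    have := map_gaussian_const_add P hsum_meas hsum C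
    rw [hvar] at this
    rw [this, hmean]
  refine ⟨hlawZ, ?_⟩
  rw [hlawZ]
  -- KL computation
  have hmpos : (0:ℝ) < m := by exact_mod_cast hm
  have hv1ne : ((σh ^ 2 * A).toNNReal : ℝ≥0) ≠ 0 := by
    simp only [ne_eq, Real.toNNReal_eq_zero, not_le]
    positivity
  have hv2ne : (((m:ℝ) * σh ^ 2).toNNReal : ℝ≥0) ≠ 0 := by
    simp only [ne_eq, Real.toNNReal_eq_zero, not_le]
    positivity
  rw [klDiv_gaussianReal _ _ hv1ne hv2ne]
  congr 1
  rw [Real.coe_toNNReal _ (by positivity : (0:ℝ) ≤ σh ^ 2 * A),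
    Real.coe_toNNReal _ (by positivity : (0:ℝ) ≤ (m:ℝ) * σh ^ 2)]
  set μ1 : ℝ := ∑ j, lam j * h j + (∑ j, (1 - lam j)) * μh with hμ1
  have hμdiff : μ1 - (m:ℝ) * μh = σh * B := by
    rw [hB, mul_div_cancel₀ _ (ne_of_gt hσ)]
    rw [hμ1]
    have hsum1 : (∑ j, (1 - lam j)) = (m:ℝ) - ∑ j, lam j := by
      rw [Finset.sum_sub_distrib]
      simp [Finset.card_univ]
    rw [hsum1]
    have : (∑ j, lam j * (h j - μh)) = (∑ j, lam j * h j) - (∑ j, lam j) * μh := by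
      rw [Finset.sum_mul, ← Finset.sum_sub_distrib]
      apply Finset.sum_congr rfl
      intro j _
      ring
    rw [this]
    ring
  rw [hμdiff]
  have hlogdiv : Real.log ((m:ℝ) * σh ^ 2 / (σh ^ 2 * A)) = Real.log m - Real.log A := by
    rw [show (m:ℝ) * σh ^ 2 / (σh ^ 2 * A) = (m:ℝ) / A by field_simp,
      Real.log_div (ne_of_gt hmpos) (ne_of_gt hApos)]
  rw [hlogdiv]
  have hquad : (σh ^ 2 * A + (σh * B) ^ 2) / (2 * ((m:ℝ) * σh ^ 2))
      = A / (2 * m) + B ^ 2 / (2 * m) := by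
    field_simp
  rw [hquad]
  ring
end
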